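/- arXiv:1811.04420 — 9 statements merged into one kernel-verified Lean document; each statement's English description precedes it below -/
import Mathlib

section
/- It holds that ∫ μ(y)² / η(y) dy ≤ 2, where the integrand is taken to be 0 on the set where η(y) = 0 (on which μ(y) = 0 for almost every y as well). -/
open MeasureTheory ENNReal Set

/-- For a conditional density `p` (so `∫ p(y, s) dy = 1` for every `s ≥ 0`),
with `η(y) = ∫₀^∞ p(y, √t) e^{−t} dt` and `μ(y) = ∫₀^∞ t p(y, √t) e^{−t} dt`,
one has `∫ μ(y)²/η(y) dy ≤ 2` (integrand taken to be `0` where `η(y) = 0`). -/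
theorem stmt3 (p : ℝ → ℝ → ℝ) (hp : Measurable (Function.uncurry p))
    (hp0 : ∀ y s, 0 ≤ p y s)
    (hp1 : ∀ s, 0 ≤ s → ∫ y, p y s = 1)
    (η μ : ℝ → ℝ≥0∞)
    (hη : ∀ y, η y = ∫⁻ t in Ioi (0:ℝ), ENNReal.ofReal (p y (Real.sqrt t) * Real.exp (-t)))
    (hμ : ∀ y, μ y = ∫⁻ t in Ioi (0:ℝ), ENNReal.ofReal (t * p y (Real.sqrt t) * Real.exp (-t))) :
    (∫⁻ y, if η y = 0 then 0 else (μ y) ^ 2 / η y) ≤ 2 := by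
  set ν : ℝ → ℝ≥0∞ := fun y =>
    ∫⁻ t in Ioi (0:ℝ), ENNReal.ofReal (t ^ 2 * p y (Real.sqrt t) * Real.exp (-t)) with hν
  have hmeas_y : ∀ y : ℝ, Measurable fun t : ℝ => p y (Real.sqrt t) := by
    intro y
    exact hp.comp (measurable_const.prodMk Real.continuous_sqrt.measurable)
  -- Cauchy-Schwarz: μ y ^ 2 ≤ η y * ν y
  have key : ∀ y, μ y ^ 2 ≤ η y * ν y := by
    intro y
    set f : ℝ → ℝ≥0∞ := fun t =>
      ENNReal.ofReal (p y (Real.sqrt t) * Real.exp (-t)) ^ ((2:ℝ)⁻¹) with hf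
    set g : ℝ → ℝ≥0∞ := fun t =>
      ENNReal.ofReal (t ^ 2 * p y (Real.sqrt t) * Real.exp (-t)) ^ ((2:ℝ)⁻¹) with hg
    have hfm : AEMeasurable f (volume.restrict (Ioi (0:ℝ))) :=
      (((hmeas_y y).mul (Real.continuous_exp.measurable.comp
        measurable_neg)).ennreal_ofReal.pow_const _).aemeasurable
    have hgm : AEMeasurable g (volume.restrict (Ioi (0:ℝ))) :=
      ((((measurable_id.pow_const 2).mul (hmeas_y y)).mul
        (Real.continuous_exp.measurable.comp measurable_neg)).ennreal_ofReal.pow_const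
        _).aemeasurable
    have hfg : ∀ t ∈ Ioi (0:ℝ),
        f t * g t = ENNReal.ofReal (t * p y (Real.sqrt t) * Real.exp (-t)) := by
      intro t ht
      have ht0 : (0:ℝ) ≤ t := le_of_lt ht
      have h1 : (0:ℝ) ≤ p y (Real.sqrt t) * Real.exp (-t) :=
        mul_nonneg (hp0 _ _) (Real.exp_pos _).le
      have hc : (0:ℝ) ≤ t * p y (Real.sqrt t) * Real.exp (-t) :=
        mul_nonneg (mul_nonneg ht0 (hp0 _ _)) (Real.exp_pos _).le
      rw [hf, hg, ← ENNReal.mul_rpow_of_nonneg _ _ (by norm_num : (0:ℝ) ≤ (2:ℝ)⁻¹),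
        ← ENNReal.ofReal_mul h1]
      have h2 : p y (Real.sqrt t) * Real.exp (-t) * (t ^ 2 * p y (Real.sqrt t) * Real.exp (-t))
          = (t * p y (Real.sqrt t) * Real.exp (-t)) ^ 2 := by ring
      rw [h2, ENNReal.ofReal_pow hc, ← ENNReal.rpow_natCast _ 2, ← ENNReal.rpow_mul]
      norm_num
    have hμy : μ y = ∫⁻ t in Ioi (0:ℝ), (f * g) t := by
      rw [hμ y]
      exact (setLIntegral_congr_fun measurableSet_Ioi
        (fun t ht => (hfg t ht).symm))
    have hCS := ENNReal.lintegral_mul_le_Lp_mul_Lq (volume.restrict (Ioi (0:ℝ)))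
      (Real.HolderConjugate.two_two : Real.HolderConjugate 2 2) hfm hgm
    have hf2 : (∫⁻ t in Ioi (0:ℝ), f t ^ (2:ℝ)) = η y := by
      rw [hη y]
      refine lintegral_congr fun t => ?_
      rw [hf, ← ENNReal.rpow_mul]
      norm_num
    have hg2 : (∫⁻ t in Ioi (0:ℝ), g t ^ (2:ℝ)) = ν y := by
      refine lintegral_congr fun t => ?_
      rw [hg, ← ENNReal.rpow_mul]
      norm_num
    rw [hf2, hg2] at hCS
    calc μ y ^ 2 ≤ (η y ^ (1/2:ℝ) * ν y ^ (1/2:ℝ)) ^ 2 := by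
          gcongr
          rw [hμy]; exact hCS
      _ = η y * ν y := by
          rw [mul_pow, ← ENNReal.rpow_natCast (η y ^ (1/2:ℝ)) 2,
            ← ENNReal.rpow_natCast (ν y ^ (1/2:ℝ)) 2, ← ENNReal.rpow_mul, ← ENNReal.rpow_mul]
          norm_num
  -- pointwise bound by ν
  have hpt : ∀ y, (if η y = 0 then 0 else (μ y) ^ 2 / η y) ≤ ν y := by
    intro y
    by_cases h : η y = 0
    · simp [h]
    · simp only [h, if_false]
      exact ENNReal.div_le_of_le_mul' (key y)
  refine le_trans (lintegral_mono hpt) ?_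
  -- compute ∫ ν via Tonelli
  have hprodmeas : Measurable fun q : ℝ × ℝ =>
      ENNReal.ofReal (q.2 ^ 2 * p q.1 (Real.sqrt q.2) * Real.exp (-q.2)) := by
    apply Measurable.ennreal_ofReal
    exact ((measurable_snd.pow_const 2).mul
      (hp.comp (measurable_fst.prodMk (Real.continuous_sqrt.measurable.comp measurable_snd)))).mul
      (Real.continuous_exp.measurable.comp measurable_snd.neg)
  have hswap : (∫⁻ y, ν y) = ∫⁻ t in Ioi (0:ℝ), ∫⁻ y,
      ENNReal.ofReal (t ^ 2 * p y (Real.sqrt t) * Real.exp (-t)) := by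
    rw [hν]
    exact lintegral_lintegral_swap hprodmeas.aemeasurable
  rw [hswap]
  have hinner : ∀ t ∈ Ioi (0:ℝ),
      (∫⁻ y, ENNReal.ofReal (t ^ 2 * p y (Real.sqrt t) * Real.exp (-t)))
        = ENNReal.ofReal (t ^ 2 * Real.exp (-t)) := by
    intro t ht
    have hint : Integrable (fun y => p y (Real.sqrt t)) := by
      by_contra hc
      have h1 := hp1 (Real.sqrt t) (Real.sqrt_nonneg t)
      rw [integral_undef hc] at h1
      exact one_ne_zero h1.symm
    have hsplit : ∀ y : ℝ, ENNReal.ofReal (t ^ 2 * p y (Real.sqrt t) * Real.exp (-t))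
        = ENNReal.ofReal (t ^ 2 * Real.exp (-t)) * ENNReal.ofReal (p y (Real.sqrt t)) := by
      intro y
      rw [← ENNReal.ofReal_mul (mul_nonneg (sq_nonneg t) (Real.exp_pos _).le)]
      ring_nf
    have hmy : Measurable fun y : ℝ => ENNReal.ofReal (p y (Real.sqrt t)) :=
      (hp.comp (measurable_id.prodMk measurable_const)).ennreal_ofReal
    simp only [hsplit]
    rw [lintegral_const_mul _ hmy]
    have hlp : (∫⁻ y, ENNReal.ofReal (p y (Real.sqrt t))) = 1 := by
      rw [← ofReal_integral_eq_lintegral_ofReal hint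
        (Filter.Eventually.of_forall fun y => hp0 y _),
        hp1 (Real.sqrt t) (Real.sqrt_nonneg t), ENNReal.ofReal_one]
    rw [hlp, mul_one]
  rw [setLIntegral_congr_fun measurableSet_Ioi hinner]
  -- Gamma integral
  have hG : Real.Gamma 3 = 2 := by
    rw [show (3:ℝ) = (2:ℕ) + 1 by norm_num, Real.Gamma_nat_eq_factorial]
    norm_num
  have hGi := Real.Gamma_eq_integral (by norm_num : (0:ℝ) < 3)
  have hconv := Real.GammaIntegral_convergent (by norm_num : (0:ℝ) < 3)
  have heq : (∫⁻ t in Ioi (0:ℝ), ENNReal.ofReal (t ^ 2 * Real.exp (-t)))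
      = ENNReal.ofReal (∫ x in Ioi (0:ℝ), Real.exp (-x) * x ^ ((3:ℝ) - 1)) := by
    rw [ofReal_integral_eq_lintegral_ofReal hconv ?_]
    · refine setLIntegral_congr_fun measurableSet_Ioi
        (fun x hx => ?_)
      congr 1
      rw [show (3:ℝ) - 1 = ((2:ℕ):ℝ) by norm_num, Real.rpow_natCast]
      ring
    · refine (ae_restrict_iff' measurableSet_Ioi).2 (Filter.Eventually.of_forall fun x hx => ?_)
      exact mul_nonneg (Real.exp_pos _).le (Real.rpow_nonneg (le_of_lt hx) _)
  rw [heq, ← hGi, hG]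
  norm_num
end

section
/- It holds that ∫ (μ(y) − η(y))² / η(y) dy ≤ 1 (with the integrand taken to be 0 where η(y) = 0), and hence the weak reconstruction threshold α_weak = [∫ (μ(y) − η(y))² / η(y) dy]⁻¹ satisfies α_weak ≥ 1. Moreover, equality α_weak = 1 holds in the noiseless phase-retrieval model, for which η(y) = e^{−y} and μ(y) = y e^{−y} for y ≥ 0. -/
open MeasureTheory ENNReal Set

lemma key_real : ∫ t in Ioi (0:ℝ), (t-1)^2 * Real.exp (-t) = 1 := by
  have hderiv : ∀ x ∈ Ici (0:ℝ), HasDerivAt (fun y => -(y^2+1) * Real.exp (-y))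
      ((x-1)^2 * Real.exp (-x)) x := by
    intro x _
    have h : HasDerivAt (fun y : ℝ => -(y^2+1) * Real.exp (-y))
        (-(2*x) * Real.exp (-x) + -(x^2+1) * (Real.exp (-x) * (-1))) x := by
      have h1 : HasDerivAt (fun y : ℝ => -(y^2+1)) (-(2*x)) x := by
        have := ((hasDerivAt_pow 2 x).add_const 1).neg
        exact this.congr_deriv (by norm_num)
      have h2 : HasDerivAt (fun y : ℝ => Real.exp (-y)) (Real.exp (-x) * (-1)) x := by
        have := (Real.hasDerivAt_exp (-x)).comp x (hasDerivAt_neg x)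
        exact this
      exact h1.mul h2
    convert h using 1; ring
  have hlim : Filter.Tendsto (fun y : ℝ => -(y^2+1) * Real.exp (-y)) Filter.atTop (nhds 0) := by
    have h := Real.tendsto_pow_mul_exp_neg_atTop_nhds_zero 2
    have h0 := Real.tendsto_exp_neg_atTop_nhds_zero
    have h2 := (h.add h0).neg
    norm_num at h2
    refine h2.congr' ?_
    filter_upwards [Filter.eventually_ge_atTop (0:ℝ)] with y _
    ring
  have := integral_Ioi_of_hasDerivAt_of_nonneg' hderiv
    (fun x _ => by positivity) hlim
  simpa using this

lemma key_int : IntegrableOn (fun t : ℝ => (t-1)^2 * Real.exp (-t)) (Ioi 0) := by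
  have hderiv : ∀ x ∈ Ici (0:ℝ), HasDerivAt (fun y => -(y^2+1) * Real.exp (-y))
      ((x-1)^2 * Real.exp (-x)) x := by
    intro x _
    have h : HasDerivAt (fun y : ℝ => -(y^2+1) * Real.exp (-y))
        (-(2*x) * Real.exp (-x) + -(x^2+1) * (Real.exp (-x) * (-1))) x := by
      have h1 : HasDerivAt (fun y : ℝ => -(y^2+1)) (-(2*x)) x := by
        have := ((hasDerivAt_pow 2 x).add_const 1).neg
        exact this.congr_deriv (by norm_num)
      have h2 : HasDerivAt (fun y : ℝ => Real.exp (-y)) (Real.exp (-x) * (-1)) x := by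
        have := (Real.hasDerivAt_exp (-x)).comp x (hasDerivAt_neg x)
        exact this
      exact h1.mul h2
    convert h using 1; ring
  have hlim : Filter.Tendsto (fun y : ℝ => -(y^2+1) * Real.exp (-y)) Filter.atTop (nhds 0) := by
    have h := Real.tendsto_pow_mul_exp_neg_atTop_nhds_zero 2
    have h0 := Real.tendsto_exp_neg_atTop_nhds_zero
    have h2 := (h.add h0).neg
    norm_num at h2
    refine h2.congr' ?_
    filter_upwards [Filter.eventually_ge_atTop (0:ℝ)] with y _
    ring
  exact integrableOn_Ioi_deriv_of_nonneg' hderiv (fun x _ => by positivity) hlim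

lemma rpow_half_sq (x : ℝ≥0∞) : x ^ (1/2:ℝ) * x ^ (1/2:ℝ) = x := by
  rw [← ENNReal.rpow_add_of_nonneg _ _ (by norm_num) (by norm_num)]
  norm_num

set_option maxHeartbeats 1000000 in
/-- For a conditional density `p` (so `∫ p(y, s) dy = 1` for every `s ≥ 0`),
with `η(y) = ∫₀^∞ p(y, √t) e^{−t} dt` and `μ(y) = ∫₀^∞ t p(y, √t) e^{−t} dt`,
one has `∫ (μ(y) − η(y))²/η(y) dy ≤ 1` (integrand taken to be `0` where
`η(y) = 0`), hence `α_weak = [∫ (μ(y) − η(y))²/η(y) dy]⁻¹ ≥ 1`. Equality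
`α_weak = 1` holds in the noiseless phase-retrieval model, where
`η(y) = e^{−y}` and `μ(y) = y e^{−y}` for `y ≥ 0`. -/
theorem stmt4 (p : ℝ → ℝ → ℝ) (hp : Measurable (Function.uncurry p))
    (hp0 : ∀ y s, 0 ≤ p y s)
    (hp1 : ∀ s, 0 ≤ s → ∫ y, p y s = 1)
    (η μ : ℝ → ℝ≥0∞)
    (hη : ∀ y, η y = ∫⁻ t in Ioi (0:ℝ), ENNReal.ofReal (p y (Real.sqrt t) * Real.exp (-t)))
    (hμ : ∀ y, μ y = ∫⁻ t in Ioi (0:ℝ), ENNReal.ofReal (t * p y (Real.sqrt t) * Real.exp (-t))) :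
    (∫⁻ y, if η y = 0 then 0 else ((μ y - η y) ⊔ (η y - μ y)) ^ 2 / η y) ≤ 1 ∧
    1 ≤ (∫⁻ y, if η y = 0 then 0 else ((μ y - η y) ⊔ (η y - μ y)) ^ 2 / η y)⁻¹ ∧
    (∫ y in Ici (0:ℝ),
        (y * Real.exp (-y) - Real.exp (-y)) ^ 2 / Real.exp (-y)) = 1 := by
  -- Part 3
  have heq3 : ∀ y : ℝ, (y * Real.exp (-y) - Real.exp (-y)) ^ 2 / Real.exp (-y)
      = (y - 1) ^ 2 * Real.exp (-y) := by
    intro y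
    have h := Real.exp_ne_zero (-y)
    field_simp
  have part3 : (∫ y in Ici (0:ℝ),
      (y * Real.exp (-y) - Real.exp (-y)) ^ 2 / Real.exp (-y)) = 1 := by
    simp_rw [heq3]
    rw [MeasureTheory.integral_Ici_eq_integral_Ioi]
    exact key_real
  -- Setup
  set g : ℝ → ℝ → ℝ≥0∞ := fun y t =>
    ENNReal.ofReal (Real.exp (-t)) * ENNReal.ofReal (p y (Real.sqrt t)) with hgdef
  have msqrt : Measurable fun q : ℝ × ℝ => p q.1 (Real.sqrt q.2) :=
    hp.comp (measurable_fst.prodMk (Real.continuous_sqrt.measurable.comp measurable_snd))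
  have mg : Measurable fun q : ℝ × ℝ => g q.1 q.2 :=
    ((ENNReal.measurable_ofReal.comp
        ((Real.continuous_exp.measurable.comp measurable_neg).comp measurable_snd))).mul
      (ENNReal.measurable_ofReal.comp msqrt)
  have mgy : ∀ y, Measurable (g y) := by
    intro y
    exact Measurable.comp (f := fun t : ℝ => ((y, t) : ℝ × ℝ))
      (g := fun q : ℝ × ℝ => g q.1 q.2) mg (measurable_const.prodMk measurable_id)
  -- slice lintegral = 1
  have hslice : ∀ s : ℝ, 0 ≤ s → (∫⁻ y, ENNReal.ofReal (p y s)) = 1 := by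
    intro s hs
    have hm : Measurable fun y => p y s :=
      hp.comp (measurable_id.prodMk measurable_const)
    have hint : Integrable (fun y => p y s) := by
      by_contra hni
      have h1 := hp1 s hs
      rw [integral_undef hni] at h1
      norm_num at h1
    rw [← MeasureTheory.ofReal_integral_eq_lintegral_ofReal hint
      (Filter.Eventually.of_forall fun y => hp0 y s), hp1 s hs, ENNReal.ofReal_one]
  -- rewrite η, μ
  have hη' : ∀ y, η y = ∫⁻ t in Ioi (0:ℝ), g y t := by
    intro y
    rw [hη]
    congr 1
    ext t
    rw [ENNReal.ofReal_mul (hp0 _ _), mul_comm]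
  have hμ' : ∀ y, μ y = ∫⁻ t in Ioi (0:ℝ), ENNReal.ofReal t * g y t := by
    intro y
    rw [hμ]
    apply setLIntegral_congr_fun measurableSet_Ioi
    intro t ht
    beta_reduce
    rw [mul_assoc, ENNReal.ofReal_mul (mem_Ioi.mp ht).le, ENNReal.ofReal_mul (hp0 _ _)]
    ring
  set A : ℝ → ℝ≥0∞ := fun y => ∫⁻ t in Ioi (0:ℝ), ENNReal.ofReal |t-1| * g y t with hAdef
  set B : ℝ → ℝ≥0∞ := fun y => ∫⁻ t in Ioi (0:ℝ), ENNReal.ofReal ((t-1)^2) * g y t with hBdef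
  have mabs : Measurable fun t : ℝ => ENNReal.ofReal |t-1| :=
    ENNReal.measurable_ofReal.comp ((measurable_id.sub measurable_const).abs)
  -- |μ - η| ≤ A
  have hmaxA : ∀ y, (μ y - η y) ⊔ (η y - μ y) ≤ A y := by
    intro y
    rw [sup_le_iff]
    constructor
    · rw [tsub_le_iff_right]
      calc μ y = ∫⁻ t in Ioi (0:ℝ), ENNReal.ofReal t * g y t := hμ' y
        _ ≤ ∫⁻ t in Ioi (0:ℝ), (ENNReal.ofReal |t-1| * g y t + g y t) := by
            refine lintegral_mono fun t => ?_
            have h1 : ENNReal.ofReal t ≤ ENNReal.ofReal |t-1| + 1 := by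
              rw [← ENNReal.ofReal_one, ← ENNReal.ofReal_add (abs_nonneg _) zero_le_one]
              exact ENNReal.ofReal_le_ofReal (by cases abs_cases (t-1) <;> linarith)
            calc ENNReal.ofReal t * g y t ≤ (ENNReal.ofReal |t-1| + 1) * g y t :=
                  mul_le_mul_left h1 _
              _ = ENNReal.ofReal |t-1| * g y t + g y t := by ring
        _ = A y + η y := by
            rw [lintegral_add_right _ (mgy y), hη' y]
    · rw [tsub_le_iff_right]
      calc η y = ∫⁻ t in Ioi (0:ℝ), g y t := hη' y
        _ ≤ ∫⁻ t in Ioi (0:ℝ),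
              (ENNReal.ofReal |t-1| * g y t + ENNReal.ofReal t * g y t) := by
            refine lintegral_mono_ae ?_
            filter_upwards [ae_restrict_mem measurableSet_Ioi] with t ht
            have h1 : (1:ℝ≥0∞) ≤ ENNReal.ofReal |t-1| + ENNReal.ofReal t := by
              rw [← ENNReal.ofReal_one, ← ENNReal.ofReal_add (abs_nonneg _) ht.le]
              exact ENNReal.ofReal_le_ofReal (by cases abs_cases (t-1) <;> linarith [(mem_Ioi.mp ht).le])
            calc g y t = 1 * g y t := (one_mul _).symm
              _ ≤ (ENNReal.ofReal |t-1| + ENNReal.ofReal t) * g y t :=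
                  mul_le_mul_left h1 _
              _ = _ := by ring
        _ = A y + μ y := by
            rw [lintegral_add_right _ (g := fun t => ENNReal.ofReal t * g y t) (ENNReal.measurable_ofReal.mul (mgy y)), hμ' y]
  -- Cauchy-Schwarz: A y ^ 2 ≤ B y * η y
  have hCS : ∀ y, A y ^ 2 ≤ B y * η y := by
    intro y
    have hh : AEMeasurable (fun t => g y t ^ (1/2:ℝ)) (volume.restrict (Ioi 0)) :=
      ((mgy y).pow measurable_const).aemeasurable
    have hf : AEMeasurable (fun t => ENNReal.ofReal |t-1| * g y t ^ (1/2:ℝ))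
        (volume.restrict (Ioi 0)) :=
      (mabs.mul ((mgy y).pow measurable_const)).aemeasurable
    have H := ENNReal.lintegral_mul_le_Lp_mul_Lq (volume.restrict (Ioi 0))
      Real.HolderConjugate.two_two hf hh
    have e1 : (∫⁻ t in Ioi (0:ℝ),
        ((fun t => ENNReal.ofReal |t-1| * g y t ^ (1/2:ℝ)) * fun t => g y t ^ (1/2:ℝ)) t)
        = A y := by
      refine lintegral_congr fun t => ?_
      simp only [Pi.mul_apply]
      rw [mul_assoc, rpow_half_sq]
    have e2 : (∫⁻ t in Ioi (0:ℝ),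
        (ENNReal.ofReal |t-1| * g y t ^ (1/2:ℝ)) ^ (2:ℝ)) = B y := by
      refine lintegral_congr fun t => ?_
      rw [ENNReal.mul_rpow_of_nonneg _ _ (by norm_num : (0:ℝ) ≤ 2)]
      congr 1
      · rw [ENNReal.ofReal_rpow_of_nonneg (abs_nonneg _) (by norm_num : (0:ℝ) ≤ 2)]
        congr 1
        rw [show (2:ℝ) = ((2:ℕ):ℝ) by norm_num, Real.rpow_natCast, sq_abs]
      · rw [← ENNReal.rpow_mul]
        norm_num
    have e3 : (∫⁻ t in Ioi (0:ℝ), (g y t ^ (1/2:ℝ)) ^ (2:ℝ)) = η y := by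
      rw [hη' y]
      refine lintegral_congr fun t => ?_
      rw [← ENNReal.rpow_mul]
      norm_num
    rw [e1, e2, e3] at H
    calc A y ^ 2 = A y * A y := sq (A y)
      _ ≤ (B y ^ (1/2:ℝ) * η y ^ (1/2:ℝ)) * (B y ^ (1/2:ℝ) * η y ^ (1/2:ℝ)) :=
          mul_le_mul' H H
      _ = (B y ^ (1/2:ℝ) * B y ^ (1/2:ℝ)) * (η y ^ (1/2:ℝ) * η y ^ (1/2:ℝ)) := by ring
      _ = B y * η y := by rw [rpow_half_sq, rpow_half_sq]
  -- pointwise bound by B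
  have hpt : ∀ y, (if η y = 0 then 0 else ((μ y - η y) ⊔ (η y - μ y)) ^ 2 / η y) ≤ B y := by
    intro y
    split
    · exact zero_le
    · refine le_trans (ENNReal.div_le_div_right (pow_le_pow_left' (hmaxA y) 2) _) ?_
      exact ENNReal.div_le_of_le_mul (hCS y)
  -- Tonelli: ∫ B = 1
  have hmAE : AEMeasurable
      (Function.uncurry fun y t => ENNReal.ofReal ((t-1)^2) * g y t)
      (volume.prod (volume.restrict (Ioi (0:ℝ)))) := by
    refine Measurable.aemeasurable ?_
    exact (Measurable.ennreal_ofReal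
      (((measurable_snd.sub measurable_const)).pow_const 2)).mul mg
  have hinner : ∀ t ∈ Ioi (0:ℝ),
      (∫⁻ y, ENNReal.ofReal ((t-1)^2) * g y t)
        = ENNReal.ofReal ((t-1)^2 * Real.exp (-t)) := by
    intro t _
    have hrw : ∀ y : ℝ, ENNReal.ofReal ((t-1)^2) * g y t
        = (ENNReal.ofReal ((t-1)^2) * ENNReal.ofReal (Real.exp (-t)))
            * ENNReal.ofReal (p y (Real.sqrt t)) := by
      intro y; rw [hgdef]; ring
    simp_rw [hrw]
    have hms : Measurable fun y : ℝ => ENNReal.ofReal (p y (Real.sqrt t)) := by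
      have h1 : Measurable fun y : ℝ => p y (Real.sqrt t) := by
        exact hp.comp (measurable_id.prodMk measurable_const)
      exact h1.ennreal_ofReal
    rw [lintegral_const_mul _ hms,
      hslice _ (Real.sqrt_nonneg t), mul_one,
      ENNReal.ofReal_mul (by positivity)]
  have hBint : (∫⁻ y, B y) = 1 := by
    calc (∫⁻ y, B y)
        = ∫⁻ y, ∫⁻ t in Ioi (0:ℝ), ENNReal.ofReal ((t-1)^2) * g y t := rfl
      _ = ∫⁻ t in Ioi (0:ℝ), ∫⁻ y, ENNReal.ofReal ((t-1)^2) * g y t :=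
          lintegral_lintegral_swap hmAE
      _ = ∫⁻ t in Ioi (0:ℝ), ENNReal.ofReal ((t-1)^2 * Real.exp (-t)) :=
          setLIntegral_congr_fun measurableSet_Ioi hinner
      _ = ENNReal.ofReal (∫ t in Ioi (0:ℝ), (t-1)^2 * Real.exp (-t)) :=
          (MeasureTheory.ofReal_integral_eq_lintegral_ofReal key_int
            (Filter.Eventually.of_forall fun t => by positivity)).symm
      _ = 1 := by rw [key_real, ENNReal.ofReal_one]
  have part1 : (∫⁻ y, if η y = 0 then 0 else ((μ y - η y) ⊔ (η y - μ y)) ^ 2 / η y) ≤ 1 :=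
    le_trans (lintegral_mono hpt) (le_of_eq hBint)
  exact ⟨part1, ENNReal.one_le_inv.2 part1, part3⟩
end

section
/- For every real κ > 0, ∑_{y=0}^∞ κ^y (y − κ)² / (κ + 1)^{y+3} = κ/(κ + 1); equivalently, the weak reconstruction threshold of the Poisson model, α_weak = [∑_{y=0}^∞ (μ(y) − η(y))²/η(y)]⁻¹ with η(y) = κ^y/(κ+1)^{y+1} and μ(y) = κ^y (y+1)/(κ+1)^{y+2}, equals 1 + 1/κ. -/
lemma poisson_sum (κ : ℝ) (hκ : 0 < κ) :
    ∑' y : ℕ, κ ^ y * ((y : ℝ) - κ) ^ 2 / (κ + 1) ^ (y + 3) = κ / (κ + 1) := by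
  have hκ1 : (0:ℝ) < κ + 1 := by linarith
  have hκ1' : (κ + 1 : ℝ) ≠ 0 := ne_of_gt hκ1
  set q : ℝ := κ / (κ + 1) with hqdef
  have hq : ‖q‖ < 1 := by
    rw [Real.norm_eq_abs, abs_of_pos (div_pos hκ hκ1)]
    rw [div_lt_one hκ1]; linarith
  have h1mq : 1 - q = 1 / (κ + 1) := by rw [hqdef]; field_simp; ring
  have h0 : HasSum (fun n : ℕ ↦ q ^ n) (1 / (1 - q)) := by
    simpa [one_div] using hasSum_geometric_of_norm_lt_one hq
  have h1 := hasSum_choose_mul_geometric_of_norm_lt_one 1 hq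
  have h2 := hasSum_choose_mul_geometric_of_norm_lt_one 2 hq
  have key : HasSum (fun y : ℕ ↦ κ ^ y * ((y : ℝ) - κ) ^ 2 / (κ + 1) ^ (y + 3))
      (κ / (κ + 1)) := by
    have H := ((h2.mul_left (2 / (κ + 1) ^ 3)).add
        (h1.mul_left ((-(2 * κ + 3)) / (κ + 1) ^ 3))).add
        (h0.mul_left ((κ + 1) ^ 2 / (κ + 1) ^ 3))
    convert H using 1
    · rfl
    · funext n
      have hc2 : (((n + 2).choose 2 : ℕ) : ℝ) = (n + 2) * (n + 1) / 2 := by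
        rw [Nat.cast_choose_two]; push_cast; ring
      have hc1 : (((n + 1).choose 1 : ℕ) : ℝ) = (n + 1) := by
        simp
      have hqn : q ^ n = κ ^ n / (κ + 1) ^ n := by rw [hqdef, div_pow]
      rw [hc2, hc1, hqn]
      have hpn : ((κ + 1) : ℝ) ^ n ≠ 0 := pow_ne_zero _ hκ1'
      field_simp
      ring
    · rw [h1mq]
      have h3 : ((κ+1):ℝ)^3 ≠ 0 := pow_ne_zero _ hκ1'
      simp only [one_div, inv_pow, inv_inv]; field_simp
      ring
  exact key.tsum_eq

/-- For the Poisson model with parameter `κ > 0`: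
`∑_{y=0}^∞ κ^y (y − κ)²/(κ+1)^{y+3} = κ/(κ+1)`; equivalently, the weak
reconstruction threshold `α_weak = [∑_y (μ(y) − η(y))²/η(y)]⁻¹`, with
`η(y) = κ^y/(κ+1)^{y+1}` and `μ(y) = κ^y (y+1)/(κ+1)^{y+2}`, equals `1 + 1/κ`. -/
theorem stmt8 (κ : ℝ) (hκ : 0 < κ) :
    (∑' y : ℕ, κ ^ y * ((y : ℝ) - κ) ^ 2 / (κ + 1) ^ (y + 3) = κ / (κ + 1)) ∧
    ((∑' y : ℕ,
        (κ ^ y * ((y : ℝ) + 1) / (κ + 1) ^ (y + 2) - κ ^ y / (κ + 1) ^ (y + 1)) ^ 2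
          / (κ ^ y / (κ + 1) ^ (y + 1)))⁻¹ = 1 + 1 / κ) := by
  have h1 := poisson_sum κ hκ
  have hκ1 : (0:ℝ) < κ + 1 := by linarith
  have hκ1' : (κ + 1 : ℝ) ≠ 0 := ne_of_gt hκ1
  refine ⟨h1, ?_⟩
  have heq : ∑' y : ℕ,
      (κ ^ y * ((y : ℝ) + 1) / (κ + 1) ^ (y + 2) - κ ^ y / (κ + 1) ^ (y + 1)) ^ 2
        / (κ ^ y / (κ + 1) ^ (y + 1))
      = ∑' y : ℕ, κ ^ y * ((y : ℝ) - κ) ^ 2 / (κ + 1) ^ (y + 3) := by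
    apply tsum_congr
    intro n
    have hkn : (κ:ℝ) ^ n ≠ 0 := pow_ne_zero _ (ne_of_gt hκ)
    have hpn : ((κ + 1) : ℝ) ^ n ≠ 0 := pow_ne_zero _ hκ1'
    field_simp
    ring
  rw [heq, h1]
  rw [inv_div]
  field_simp
end

section
/- For every real β > 0 and κ > 0, (β/(κ+1)²) ∑_{y=0}^∞ (κ/(κ+1))^y (y − κ)² / (y + β(κ+1) + 1) = C_{β,κ} ∫₀^{κ/(κ+1)} x^{β(κ+1)} / (1 − x) dx − β(β + 1), where C_{β,κ} = (β+1)² β (1 + 1/κ)^{β(κ+1)+1}. The left-hand side equals f(β) = ∑_{y=0}^∞ (μ(y) − η(y))²/(η(y) + μ(y)/β) for the Poisson model with η(y) = κ^y/(κ+1)^{y+1} and μ(y) = κ^y (y+1)/(κ+1)^{y+2}. -/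
open MeasureTheory intervalIntegral

/-- For the Poisson model with parameter `κ > 0` and every `β > 0`:
`(β/(κ+1)²) ∑_y (κ/(κ+1))^y (y − κ)²/(y + β(κ+1) + 1)
  = C_{β,κ} ∫₀^{κ/(κ+1)} x^{β(κ+1)}/(1 − x) dx − β(β+1)`,
where `C_{β,κ} = (β+1)² β (1 + 1/κ)^{β(κ+1)+1}`; moreover the left-hand side
equals `f(β) = ∑_y (μ(y) − η(y))²/(η(y) + μ(y)/β)` with
`η(y) = κ^y/(κ+1)^{y+1}` and `μ(y) = κ^y (y+1)/(κ+1)^{y+2}`. -/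
theorem stmt10 (β κ : ℝ) (hβ : 0 < β) (hκ : 0 < κ) :
    ((β / (κ + 1) ^ 2) *
        ∑' y : ℕ, (κ / (κ + 1)) ^ y * ((y : ℝ) - κ) ^ 2 / ((y : ℝ) + β * (κ + 1) + 1)
      = (β + 1) ^ 2 * β * (1 + 1 / κ) ^ (β * (κ + 1) + 1) *
            (∫ x in (0:ℝ)..(κ / (κ + 1)), x ^ (β * (κ + 1)) / (1 - x))
          - β * (β + 1)) ∧
    (∑' y : ℕ,
        (κ ^ y * ((y : ℝ) + 1) / (κ + 1) ^ (y + 2) - κ ^ y / (κ + 1) ^ (y + 1)) ^ 2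
          / (κ ^ y / (κ + 1) ^ (y + 1) + κ ^ y * ((y : ℝ) + 1) / (κ + 1) ^ (y + 2) / β)
      = (β / (κ + 1) ^ 2) *
          ∑' y : ℕ, (κ / (κ + 1)) ^ y * ((y : ℝ) - κ) ^ 2 / ((y : ℝ) + β * (κ + 1) + 1)) := by
  have hκ1 : (0:ℝ) < κ + 1 := by linarith
  set q : ℝ := κ / (κ + 1) with hqdef
  have hq0 : 0 < q := div_pos hκ hκ1
  have hq1 : q < 1 := (div_lt_one hκ1).mpr (by linarith)
  set a : ℝ := β * (κ + 1) with hadef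
  have ha : 0 < a := mul_pos hβ hκ1
  clear_value q a
  have hden : ∀ y : ℕ, (0:ℝ) < (y:ℝ) + a + 1 := fun y => by positivity
  have hnq : ‖q‖ < 1 := by rwa [Real.norm_eq_abs, abs_of_pos hq0]
  have h0 : Summable (fun y : ℕ => q ^ y) := summable_geometric_of_lt_one hq0.le hq1
  have h1 : Summable (fun y : ℕ => (y:ℝ) * q ^ y) := by
    simpa using summable_pow_mul_geometric_of_norm_lt_one (R := ℝ) 1 hnq
  have h2 : Summable (fun y : ℕ => (y:ℝ)^2 * q ^ y) :=
    summable_pow_mul_geometric_of_norm_lt_one (R := ℝ) 2 hnq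
  -- summability of the main series pieces
  have S2 : Summable (fun y : ℕ => q ^ y / ((y:ℝ) + a + 1)) := by
    apply Summable.of_nonneg_of_le (fun y => by positivity) _ h0
    intro y
    exact div_le_self (by positivity) (by have := (Nat.cast_nonneg y : (0:ℝ) ≤ y); linarith)
  have S1 : Summable (fun y : ℕ => q ^ y * ((y:ℝ) - κ) ^ 2 / ((y:ℝ) + a + 1)) := by
    have hs_poly : Summable (fun y : ℕ => ((y:ℝ) + κ)^2 * q ^ y) :=
      ((h2.add ((h1.mul_left (2*κ)).add (h0.mul_left (κ^2)))).congr (fun y => by ring))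
    apply Summable.of_nonneg_of_le (fun y => by positivity) _ hs_poly
    intro y
    rw [div_le_iff₀ (hden y)]
    have hy : (0:ℝ) ≤ (y:ℝ) := Nat.cast_nonneg y
    have hqy : (0:ℝ) ≤ q ^ y := by positivity
    nlinarith [mul_nonneg (mul_nonneg hqy hy) hκ.le, mul_nonneg hqy (mul_nonneg (mul_nonneg hy hκ.le) (by linarith : (0:ℝ) ≤ (y:ℝ) + a)), mul_nonneg (mul_nonneg hqy (sq_nonneg ((y:ℝ)+κ))) (by linarith : (0:ℝ) ≤ (y:ℝ) + a)]
  have S3 : Summable (fun y : ℕ => q ^ y * ((y:ℝ) - (2*κ + a + 1))) :=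
    (h1.sub (h0.mul_left (2*κ + a + 1))).congr (fun y => by ring)
  set T : ℝ := ∑' y : ℕ, q ^ y / ((y:ℝ) + a + 1) with hT
  -- sum identity
  have hsplit : ∀ y : ℕ, q ^ y * ((y:ℝ) - κ) ^ 2 / ((y:ℝ) + a + 1)
      = (a + κ + 1)^2 * (q ^ y / ((y:ℝ) + a + 1)) + q ^ y * ((y:ℝ) - (2*κ + a + 1)) := by
    intro y
    field_simp
    ring
  have hsum1 : ∑' y : ℕ, q ^ y = (1 - q)⁻¹ := tsum_geometric_of_lt_one hq0.le hq1
  have hsumy : ∑' y : ℕ, (y:ℝ) * q ^ y = q / (1 - q)^2 := by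
    simpa using tsum_coe_mul_geometric_of_norm_lt_one hnq
  have h1mq : 1 - q = 1/(κ+1) := by rw [hqdef]; field_simp; ring
  have hsumS : ∑' y : ℕ, q ^ y * ((y:ℝ) - κ) ^ 2 / ((y:ℝ) + a + 1)
      = (a + κ + 1)^2 * T + (κ*(κ+1) - (2*κ + a + 1)*(κ+1)) := by
    rw [tsum_congr hsplit, Summable.tsum_add (S2.mul_left _) S3, tsum_mul_left]
    congr 1
    have : ∑' y : ℕ, q ^ y * ((y:ℝ) - (2*κ + a + 1))
        = ∑' y : ℕ, ((y:ℝ) * q ^ y - (2*κ + a + 1) * q ^ y) := tsum_congr (fun y => by ring)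
    rw [this, Summable.tsum_sub h1 (h0.mul_left _), tsum_mul_left, hsum1, hsumy, h1mq, hqdef]
    have h1κ : (1:ℝ) + κ ≠ 0 := by positivity
    field_simp [h1κ]
  -- integral identity
  have hint_term : ∀ y : ℕ, ∫ x in (0:ℝ)..q, x ^ (a + (y:ℝ)) = q^(a+1) * (q ^ y / ((y:ℝ) + a + 1)) := by
    intro y
    have hy : (0:ℝ) ≤ (y:ℝ) := Nat.cast_nonneg y
    rw [integral_rpow (Or.inl (by linarith))]
    rw [Real.zero_rpow (by positivity : a + (y:ℝ) + 1 ≠ 0)]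
    rw [show a + (y:ℝ) + 1 = (a+1) + (y:ℝ) by ring, Real.rpow_add hq0, Real.rpow_natCast]
    ring
  have hmeas : ∀ y : ℕ, IntegrableOn (fun x : ℝ => x ^ (a + (y:ℝ))) (Set.Ioc 0 q) := by
    intro y
    have hy : (0:ℝ) ≤ (y:ℝ) := Nat.cast_nonneg y
    exact (intervalIntegrable_iff_integrableOn_Ioc_of_le hq0.le).mp
      (intervalIntegrable_rpow' (by linarith))
  have hval : ∀ y : ℕ, (∫ x in Set.Ioc (0:ℝ) q, ‖x ^ (a + (y:ℝ))‖)
      = q^(a+1) * (q ^ y / ((y:ℝ) + a + 1)) := by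
    intro y
    rw [setIntegral_congr_fun measurableSet_Ioc
      (fun x hx => Real.norm_of_nonneg (Real.rpow_nonneg hx.1.le _)),
      ← intervalIntegral.integral_of_le hq0.le, hint_term y]
  have hswap : ∑' y : ℕ, (∫ x in Set.Ioc (0:ℝ) q, x ^ (a + (y:ℝ)))
      = ∫ x in Set.Ioc (0:ℝ) q, (∑' y : ℕ, x ^ (a + (y:ℝ))) := by
    apply integral_tsum_of_summable_integral_norm hmeas
    apply Summable.congr ((S2.mul_left (q^(a+1)))) (fun y => (hval y).symm)
  have hptw : ∀ x ∈ Set.Ioc (0:ℝ) q, x ^ a / (1 - x) = ∑' y : ℕ, x ^ (a + (y:ℝ)) := by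
    intro x hx
    have hx1 : x < 1 := lt_of_le_of_lt hx.2 hq1
    rw [tsum_congr (fun y : ℕ => by rw [Real.rpow_add hx.1, Real.rpow_natCast]),
      tsum_mul_left, tsum_geometric_of_lt_one hx.1.le hx1, div_eq_mul_inv]
  have hI : (∫ x in (0:ℝ)..q, x ^ a / (1 - x)) = q^(a+1) * T := by
    rw [intervalIntegral.integral_of_le hq0.le,
      setIntegral_congr_fun measurableSet_Ioc hptw, ← hswap]
    rw [tsum_congr (fun y : ℕ => by
      rw [← intervalIntegral.integral_of_le hq0.le, hint_term y]), tsum_mul_left, hT]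
  -- rpow cancellation
  have hqinv : (1 + 1/κ) ^ (a+1) * q^(a+1) = 1 := by
    rw [← Real.mul_rpow (by positivity) hq0.le,
      show (1 + 1/κ) * q = 1 by rw [hqdef]; field_simp, Real.one_rpow]
  constructor
  · rw [hsumS, hI]
    have : (β + 1) ^ 2 * β * (1 + 1 / κ) ^ (a + 1) * (q ^ (a + 1) * T)
        = (β + 1) ^ 2 * β * T * ((1 + 1/κ) ^ (a+1) * q^(a+1)) := by ring
    rw [this, hqinv, mul_one]
    rw [hadef]
    field_simp
    ring
  · rw [← tsum_mul_left]
    apply tsum_congr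
    intro y
    have hA : (0:ℝ) < κ ^ y := pow_pos hκ y
    have hB : (0:ℝ) < (κ+1) ^ y := pow_pos hκ1 y
    have hd2 : (0:ℝ) < (y:ℝ) + β * (κ + 1) + 1 := by positivity
    have hd1 : (0:ℝ) < κ ^ y / ((κ + 1) ^ y * (κ + 1))
        + κ ^ y * ((y : ℝ) + 1) / ((κ + 1) ^ y * (κ + 1) * (κ + 1)) / β := by positivity
    rw [hqdef, hadef]
    simp only [pow_succ, div_pow]
    field_simp [hA.ne', hB.ne', hκ1.ne', hβ.ne', hd2.ne', hd1.ne']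
    ring
end

section
/- For every σ > 0, ∫₀^∞ z · Φ(−z/σ) e^{−z} dz = 1/2 + (σ² − 1) exp(σ²/2) Φ(−σ) − σ/√(2π), where Φ is the standard normal cumulative distribution function. -/
open MeasureTheory Set

/-- The standard normal cumulative distribution function. -/
noncomputable def stdNormalCDF (x : ℝ) : ℝ :=
  ∫ t in Iic x, (Real.sqrt (2 * Real.pi))⁻¹ * Real.exp (-t ^ 2 / 2)

section Helpers
open Filter Topology

noncomputable def nphi (t : ℝ) : ℝ := (Real.sqrt (2 * Real.pi))⁻¹ * Real.exp (-t ^ 2 / 2)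

lemma nphi_cont : Continuous nphi := by
  unfold nphi; fun_prop

lemma nphi_nonneg (t : ℝ) : 0 ≤ nphi t := by
  unfold nphi
  positivity

lemma nphi_even (t : ℝ) : nphi (-t) = nphi t := by
  simp [nphi]

lemma nphi_integrable : Integrable nphi := by
  have h : Integrable (fun t : ℝ => Real.exp (-(1/2) * t ^ 2)) := integrable_exp_neg_mul_sq (by norm_num)
  have := h.const_mul (Real.sqrt (2 * Real.pi))⁻¹
  refine this.congr (ae_of_all _ fun t => ?_)
  unfold nphi; ring_nf

lemma nphi_integral : ∫ t, nphi t = 1 := by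
  have h : ∫ t : ℝ, Real.exp (-(1/2) * t ^ 2) = Real.sqrt (Real.pi / (1/2)) :=
    integral_gaussian (1/2)
  have hs : Real.sqrt (Real.pi / (1/2)) = Real.sqrt (2 * Real.pi) := by norm_num [mul_comm]
  have : ∫ t, nphi t = (Real.sqrt (2 * Real.pi))⁻¹ * ∫ t : ℝ, Real.exp (-(1/2) * t ^ 2) := by
    rw [← integral_const_mul]
    congr 1; funext t; unfold nphi; ring_nf
  rw [this, h, hs, inv_mul_cancel₀]
  positivity

lemma cdf_eq (x : ℝ) : stdNormalCDF x = ∫ t in Iic x, nphi t := rfl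

lemma cdf_hasDerivAt (x : ℝ) : HasDerivAt stdNormalCDF (nphi x) x := by
  have key : ∀ y : ℝ, stdNormalCDF y = stdNormalCDF 0 + ∫ t in (0:ℝ)..y, nphi t := by
    intro y
    rw [cdf_eq, cdf_eq]
    have := intervalIntegral.integral_Iic_sub_Iic (f := nphi) (μ := volume)
      (nphi_integrable.integrableOn) (nphi_integrable.integrableOn) (a := 0) (b := y)
    linarith [this]
  have hd : HasDerivAt (fun y => stdNormalCDF 0 + ∫ t in (0:ℝ)..y, nphi t) (nphi x) x := by
    refine HasDerivAt.const_add _ ?_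
    exact intervalIntegral.integral_hasDerivAt_right
      nphi_integrable.intervalIntegrable
      (nphi_cont.stronglyMeasurableAtFilter _ _) nphi_cont.continuousAt
  exact hd.congr_of_eventuallyEq (Filter.Eventually.of_forall key)

lemma cdf_cont : Continuous stdNormalCDF :=
  continuous_iff_continuousAt.2 fun x => (cdf_hasDerivAt x).continuousAt

lemma cdf_nonneg (x : ℝ) : 0 ≤ stdNormalCDF x :=
  setIntegral_nonneg measurableSet_Iic fun t _ => nphi_nonneg t

lemma cdf_le_one (x : ℝ) : stdNormalCDF x ≤ 1 := by
  rw [cdf_eq, ← nphi_integral]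
  exact setIntegral_le_integral nphi_integrable (ae_of_all _ nphi_nonneg)

lemma cdf_add_compl (x : ℝ) : stdNormalCDF x + ∫ t in Ioi x, nphi t = 1 := by
  rw [cdf_eq, ← nphi_integral]
  exact intervalIntegral.integral_Iic_add_Ioi nphi_integrable.integrableOn nphi_integrable.integrableOn

lemma cdf_neg_eq (x : ℝ) : stdNormalCDF (-x) = 1 - stdNormalCDF x := by
  have h1 : stdNormalCDF (-x) = ∫ t in Ioi x, nphi t := by
    rw [cdf_eq]
    have : ∫ t in Iic (-x), nphi t = ∫ t in Iic (-x), nphi (-t) := by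
      simp_rw [nphi_even]
    rw [this, integral_comp_neg_Iic, neg_neg]
  linarith [cdf_add_compl x, h1]

lemma cdf_zero : stdNormalCDF 0 = 1/2 := by
  have := cdf_neg_eq 0
  rw [neg_zero] at this
  linarith

lemma cdf_tendsto_one : Tendsto stdNormalCDF atTop (𝓝 1) := by
  have := (aecover_Iic (μ := volume) (l := atTop) (b := fun x : ℝ => x)
    tendsto_id).integral_tendsto_of_countably_generated nphi_integrable
  rw [nphi_integral] at this
  exact this

noncomputable def Gfun (σ z : ℝ) : ℝ :=
  -(1+z) * Real.exp (-z) * stdNormalCDF (-z/σ)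
    + (σ / Real.sqrt (2*Real.pi)) * Real.exp (σ^2/2 - (z+σ^2)^2/(2*σ^2))
    + (σ^2-1) * Real.exp (σ^2/2) * stdNormalCDF ((z+σ^2)/σ)

lemma Gderiv (σ : ℝ) (hσ : 0 < σ) (z : ℝ) :
    HasDerivAt (Gfun σ) (z * stdNormalCDF (-z/σ) * Real.exp (-z)) z := by
  have ha : HasDerivAt (fun z : ℝ => -(1+z)) (-1) z := by
    exact ((hasDerivAt_id z).const_add 1).neg
  have hb : HasDerivAt (fun z : ℝ => Real.exp (-z)) (-Real.exp (-z)) z := by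
    simpa using ((hasDerivAt_id z).neg).exp
  have h1 : HasDerivAt (fun z : ℝ => -(1+z) * Real.exp (-z)) (z * Real.exp (-z)) z := by
    have := ha.mul hb
    exact this.congr_deriv (by ring)
  have hin : HasDerivAt (fun z : ℝ => -z/σ) (-1/σ) z := ((hasDerivAt_id z).neg).div_const σ
  have h2 : HasDerivAt (fun z : ℝ => stdNormalCDF (-z/σ)) (nphi (-z/σ) * (-1/σ)) z :=
    by have := (cdf_hasDerivAt (-z/σ)).comp z hin; exact this
  have hT1 := h1.mul h2
  have hp : HasDerivAt (fun z : ℝ => (z+σ^2)^2) (2*(z+σ^2)) z := by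
    have := ((hasDerivAt_id z).add_const (σ^2)).pow 2
    refine this.congr_deriv ?_
    norm_num
  have hu : HasDerivAt (fun z : ℝ => σ^2/2 - (z+σ^2)^2/(2*σ^2)) (-(2*(z+σ^2))/(2*σ^2)) z := by
    have := (hp.div_const (2*σ^2)).const_sub (σ^2/2)
    exact this.congr_deriv (by ring)
  have hT2 := (hu.exp).const_mul (σ / Real.sqrt (2*Real.pi))
  have hin3 : HasDerivAt (fun z : ℝ => (z+σ^2)/σ) (1/σ) z :=
    ((hasDerivAt_id z).add_const (σ^2)).div_const σ
  have hT3 := ((cdf_hasDerivAt ((z+σ^2)/σ)).comp z hin3).const_mul ((σ^2-1) * Real.exp (σ^2/2))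
  have := (hT1.add hT2).add hT3
  refine this.congr_deriv ?_
  have hσ' : σ ≠ 0 := ne_of_gt hσ
  have hs : Real.sqrt (2*Real.pi) ≠ 0 := by positivity
  unfold nphi
  have E1 : Real.exp (-z) * Real.exp (-(-z/σ)^2/2)
      = Real.exp (σ^2/2 - (z+σ^2)^2/(2*σ^2)) := by
    rw [← Real.exp_add]; congr 1; field_simp; ring
  have E3 : Real.exp (σ^2/2) * Real.exp (-((z+σ^2)/σ)^2/2)
      = Real.exp (-z) * Real.exp (-(-z/σ)^2/2) := by
    rw [← Real.exp_add, ← Real.exp_add]; congr 1; field_simp; ring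
  set S := Real.sqrt (2*Real.pi) with hS
  set X := Real.exp (-z) with hX
  set P := Real.exp (-(-z/σ)^2/2) with hP
  set U := Real.exp (σ^2/2 - (z+σ^2)^2/(2*σ^2)) with hU
  set Q := Real.exp (-((z+σ^2)/σ)^2/2) with hQdef
  set Eσ := Real.exp (σ^2/2) with hEσ
  have hEσ0 : Eσ ≠ 0 := Real.exp_ne_zero _
  have hQ : Q = X*P/Eσ := by
    field_simp
    linarith [E3]
  rw [← E1, hQ]
  field_simp
  ring

lemma Gtendsto (σ : ℝ) (hσ : 0 < σ) :
    Tendsto (Gfun σ) atTop (𝓝 ((σ^2-1) * Real.exp (σ^2/2))) := by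
  have hb : Tendsto (fun z : ℝ => -(1+z) * Real.exp (-z)) atTop (𝓝 0) := by
    have h0 := Real.tendsto_exp_neg_atTop_nhds_zero
    have h1 := Real.tendsto_pow_mul_exp_neg_atTop_nhds_zero 1
    have := (h0.add h1).neg
    simp only [add_zero, neg_zero, pow_one] at this
    refine this.congr fun z => by ring
  have hbdd : IsBoundedUnder (· ≤ ·) atTop (fun z : ℝ => ‖stdNormalCDF (-z/σ)‖) := by
    refine isBoundedUnder_of ⟨1, fun z => ?_⟩
    rw [Real.norm_eq_abs, abs_of_nonneg (cdf_nonneg _)]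
    exact cdf_le_one _
  have hT1 : Tendsto (fun z : ℝ => -(1+z) * Real.exp (-z) * stdNormalCDF (-z/σ))
      atTop (𝓝 0) := hb.zero_mul_isBoundedUnder_le hbdd
  have hsq : Tendsto (fun z : ℝ => (z+σ^2)^2/(2*σ^2)) atTop atTop := by
    refine Tendsto.atTop_div_const (by positivity) ?_
    have h1 : Tendsto (fun z : ℝ => z + σ^2) atTop atTop :=
      tendsto_atTop_add_const_right _ _ tendsto_id
    have := h1.atTop_mul_atTop₀ h1
    refine this.congr fun z => by ring
  have hu : Tendsto (fun z : ℝ => σ^2/2 - (z+σ^2)^2/(2*σ^2)) atTop atBot := by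
    simp only [sub_eq_add_neg]
    exact tendsto_atBot_add_const_left _ _ (tendsto_neg_atTop_atBot.comp hsq)
  have hT2 : Tendsto (fun z : ℝ => (σ / Real.sqrt (2*Real.pi)) *
      Real.exp (σ^2/2 - (z+σ^2)^2/(2*σ^2))) atTop (𝓝 0) := by
    have := (Real.tendsto_exp_atBot.comp hu).const_mul (σ / Real.sqrt (2*Real.pi))
    simpa using this
  have hT3 : Tendsto (fun z : ℝ => (σ^2-1) * Real.exp (σ^2/2) * stdNormalCDF ((z+σ^2)/σ))
      atTop (𝓝 ((σ^2-1) * Real.exp (σ^2/2))) := by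
    have h1 : Tendsto (fun z : ℝ => (z+σ^2)/σ) atTop atTop :=
      (tendsto_atTop_add_const_right _ _ tendsto_id).atTop_div_const hσ
    have := (cdf_tendsto_one.comp h1).const_mul ((σ^2-1) * Real.exp (σ^2/2))
    simpa using this
  have := (hT1.add hT2).add hT3
  simp only [zero_add] at this; exact this

lemma intOn (σ : ℝ) (hσ : 0 < σ) :
    IntegrableOn (fun z : ℝ => z * stdNormalCDF (-z/σ) * Real.exp (-z)) (Ioi 0) := by
  have hg : IntegrableOn (fun x : ℝ => Real.exp (-x) * x ^ ((2:ℝ) - 1)) (Ioi 0) :=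
    Real.GammaIntegral_convergent (by norm_num)
  have hg' : IntegrableOn (fun x : ℝ => Real.exp (-x) * x) (Ioi 0) := by
    refine hg.congr_fun (fun x hx => ?_) measurableSet_Ioi
    simp only [show ((2:ℝ)-1) = 1 by norm_num, Real.rpow_one]
  refine Integrable.mono hg' ?_ ?_
  · exact ((continuous_id.mul (cdf_cont.comp (by fun_prop))).mul
      (Real.continuous_exp.comp continuous_neg)).aestronglyMeasurable.restrict
  · rw [ae_restrict_iff' measurableSet_Ioi]
    refine ae_of_all _ fun z hz => ?_
    have h0 : (0:ℝ) ≤ z := le_of_lt hz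
    rw [Real.norm_eq_abs, Real.norm_eq_abs,
      abs_of_nonneg (by positivity : (0:ℝ) ≤ Real.exp (-z) * z),
      abs_of_nonneg (mul_nonneg (mul_nonneg h0 (cdf_nonneg _)) (Real.exp_pos _).le)]
    calc z * stdNormalCDF (-z/σ) * Real.exp (-z)
        ≤ z * 1 * Real.exp (-z) := by
          refine mul_le_mul_of_nonneg_right ?_ (Real.exp_pos _).le
          exact mul_le_mul_of_nonneg_left (cdf_le_one _) h0
      _ = Real.exp (-z) * z := by ring


end Helpers

/-- For every `σ > 0`,
`∫₀^∞ z Φ(−z/σ) e^{−z} dz = 1/2 + (σ² − 1) e^{σ²/2} Φ(−σ) − σ/√(2π)`. -/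
theorem stmt14 (σ : ℝ) (hσ : 0 < σ) :
    ∫ z in Ioi (0:ℝ), z * stdNormalCDF (-z / σ) * Real.exp (-z)
      = 1 / 2 + (σ ^ 2 - 1) * Real.exp (σ ^ 2 / 2) * stdNormalCDF (-σ)
        - σ / Real.sqrt (2 * Real.pi) := by
  have key := integral_Ioi_of_hasDerivAt_of_tendsto' (f := Gfun σ)
    (fun x _ => Gderiv σ hσ x) (intOn σ hσ) (Gtendsto σ hσ)
  rw [key]
  have h1 : ((0:ℝ)+σ^2)/σ = σ := by field_simp; ring
  have h2 : σ^2/2 - ((0:ℝ)+σ^2)^2/(2*σ^2) = 0 := by field_simp; ring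
  unfold Gfun
  rw [h1, h2, cdf_neg_eq σ]
  simp [cdf_zero]
  ring
end

section
/- For every σ > 0, the infimum over y > 0 of μ(y)/η(y) equals σ · h(−σ) and is strictly positive, where η(y) = exp(σ²/2 − y) Φ(y/σ − σ), μ(y) = (y − σ²) η(y) + (σ/√(2π)) exp(−y²/(2σ²)), h(x) = x + Φ′(x)/Φ(x), and Φ and Φ′ are the standard normal CDF and PDF. (This uses that h is strictly increasing and everywhere positive.) -/
open MeasureTheory Set

/-- The standard normal probability density function. -/
noncomputable def stdNormalPDF (x : ℝ) : ℝ :=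
  (Real.sqrt (2 * Real.pi))⁻¹ * Real.exp (-x ^ 2 / 2)

open Filter Topology Real

lemma sqrt2pi_pos : 0 < Real.sqrt (2 * Real.pi) :=
  Real.sqrt_pos.2 (by positivity)

lemma pdf_pos (x : ℝ) : 0 < stdNormalPDF x := by
  unfold stdNormalPDF
  positivity

lemma pdf_eq : stdNormalPDF = fun t => (Real.sqrt (2 * Real.pi))⁻¹ * Real.exp (-(2⁻¹) * t ^ 2) := by
  funext t; unfold stdNormalPDF; ring_nf

lemma integrable_pdf : Integrable stdNormalPDF := by
  rw [pdf_eq]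
  exact (integrable_exp_neg_mul_sq (by norm_num)).const_mul _

lemma continuous_pdf : Continuous stdNormalPDF := by
  unfold stdNormalPDF; fun_prop

lemma hasDerivAt_pdf (x : ℝ) : HasDerivAt stdNormalPDF (-x * stdNormalPDF x) x := by
  have h1 : HasDerivAt (fun t : ℝ => -t ^ 2 / 2) (-x) x := by
    have := ((hasDerivAt_pow 2 x).neg).div_const 2
    refine this.congr_deriv ?_
    ring
  have := (h1.exp).const_mul (Real.sqrt (2 * Real.pi))⁻¹
  refine this.congr_deriv ?_
  unfold stdNormalPDF
  ring

lemma cdf_sub (a b : ℝ) : stdNormalCDF b - stdNormalCDF a = ∫ t in a..b, stdNormalPDF t := by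
  unfold stdNormalCDF
  exact intervalIntegral.integral_Iic_sub_Iic integrable_pdf.integrableOn integrable_pdf.integrableOn

lemma hasDerivAt_cdf (x : ℝ) : HasDerivAt stdNormalCDF (stdNormalPDF x) x := by
  have h1 : stdNormalCDF = fun y => stdNormalCDF 0 + ∫ t in (0:ℝ)..y, stdNormalPDF t := by
    funext y
    rw [← cdf_sub 0 y]; ring
  rw [h1]
  refine HasDerivAt.const_add _ ?_
  exact intervalIntegral.integral_hasDerivAt_right
    integrable_pdf.intervalIntegrable
    (continuous_pdf.stronglyMeasurableAtFilter _ _)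
    continuous_pdf.continuousAt

lemma cdf_pos (x : ℝ) : 0 < stdNormalCDF x := by
  unfold stdNormalCDF
  rw [setIntegral_pos_iff_support_of_nonneg_ae ?_ ?_]
  · have hsupp : (Function.support fun t : ℝ => (Real.sqrt (2 * Real.pi))⁻¹ * Real.exp (-t ^ 2 / 2))
        = Set.univ := by
      ext t; simp only [Function.mem_support, mem_univ, iff_true]
      exact (pdf_pos t).ne'
    rw [hsupp, univ_inter, Real.volume_Iic]
    exact ENNReal.zero_lt_top
  · filter_upwards with t using (pdf_pos t).le
  · exact integrable_pdf.integrableOn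

lemma tendsto_cdf_atBot : Tendsto stdNormalCDF atBot (𝓝 0) := by
  have h1 : ∀ x, stdNormalCDF x = stdNormalCDF 0 - ∫ t in x..(0:ℝ), stdNormalPDF t := by
    intro x; rw [← cdf_sub x 0]; ring
  have h2 : Tendsto (fun x => ∫ t in x..(0:ℝ), stdNormalPDF t) atBot
      (𝓝 (∫ t in Iic (0:ℝ), stdNormalPDF t)) :=
    intervalIntegral_tendsto_integral_Iic 0 integrable_pdf.integrableOn tendsto_id
  have h3 : (∫ t in Iic (0:ℝ), stdNormalPDF t) = stdNormalCDF 0 := rfl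
  rw [h3] at h2
  have := (tendsto_const_nhds : Tendsto (fun _ : ℝ => stdNormalCDF 0) atBot _).sub h2
  simpa [← h1] using this

lemma tendsto_pdf_atBot : Tendsto stdNormalPDF atBot (𝓝 0) := by
  have h0 : Tendsto (fun x : ℝ => (-x) * (-x)) atBot atTop :=
    tendsto_neg_atBot_atTop.atTop_mul_atTop₀ tendsto_neg_atBot_atTop
  have h1 : Tendsto (fun x : ℝ => x ^ 2) atBot atTop := h0.congr (fun x => by ring)
  have h2 : Tendsto (fun x : ℝ => -x ^ 2 / 2) atBot atBot := by
    apply Tendsto.atBot_div_const two_pos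
    exact tendsto_neg_atTop_atBot.comp h1
  have h3 : Tendsto (fun x : ℝ => Real.exp (-x ^ 2 / 2)) atBot (𝓝 0) :=
    Real.tendsto_exp_atBot.comp h2
  have h4 := h3.const_mul (Real.sqrt (2 * Real.pi))⁻¹
  rw [mul_zero] at h4
  unfold stdNormalPDF
  exact h4

lemma integrableOn_mul_pdf (x : ℝ) : IntegrableOn (fun t => t * stdNormalPDF t) (Iic x) := by
  have hg := (integrable_rpow_mul_exp_neg_mul_sq (b := 2⁻¹) (by norm_num) (s := 1)
    (by norm_num)).const_mul (Real.sqrt (2 * Real.pi))⁻¹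
  refine (hg.congr (ae_of_all _ fun t => ?_)).integrableOn
  show (Real.sqrt (2 * Real.pi))⁻¹ * (t ^ (1:ℝ) * Real.exp (-2⁻¹ * t ^ 2)) = t * stdNormalPDF t
  rw [Real.rpow_one]
  unfold stdNormalPDF
  ring_nf

lemma integral_mul_pdf (x : ℝ) : ∫ t in Iic x, t * stdNormalPDF t = -stdNormalPDF x := by
  have := integral_Iic_of_hasDerivAt_of_tendsto' (a := x)
    (f := fun t => -stdNormalPDF t) (f' := fun t => t * stdNormalPDF t)
    (m := 0)
    (fun t _ => (hasDerivAt_pdf t).neg.congr_deriv (by ring))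
    (integrableOn_mul_pdf x)
    (by simpa using tendsto_pdf_atBot.neg)
  simpa using this

lemma mills (x : ℝ) (hx : x < 0) : -x * stdNormalCDF x ≤ stdNormalPDF x := by
  have key : stdNormalCDF x ≤ ∫ t in Iic x, (t / x) * stdNormalPDF t := by
    unfold stdNormalCDF
    apply setIntegral_mono_on integrable_pdf.integrableOn
    · exact ((integrableOn_mul_pdf x).div_const x).congr (ae_of_all _ fun t => by ring)
    · exact measurableSet_Iic
    · intro t ht
      have ht' : t ≤ x := ht
      have h1 : 1 ≤ t / x := by
        rw [le_div_iff_of_neg hx]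
        simpa using ht'
      have : stdNormalPDF t = stdNormalPDF t := rfl
      calc (Real.sqrt (2 * Real.pi))⁻¹ * Real.exp (-t ^ 2 / 2) = stdNormalPDF t := rfl
        _ = 1 * stdNormalPDF t := by ring
        _ ≤ (t / x) * stdNormalPDF t := by
            apply mul_le_mul_of_nonneg_right h1 (pdf_pos t).le
  have h2 : ∫ t in Iic x, (t / x) * stdNormalPDF t = -stdNormalPDF x / x := by
    have : ∀ t, (t / x) * stdNormalPDF t = x⁻¹ * (t * stdNormalPDF t) := fun t => by ring
    simp_rw [this]
    rw [integral_const_mul, integral_mul_pdf]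
    ring
  rw [h2] at key
  calc -x * stdNormalCDF x ≤ -x * (-stdNormalPDF x / x) := by
        apply mul_le_mul_of_nonneg_left key (by linarith)
    _ = x * stdNormalPDF x / x := by ring
    _ = stdNormalPDF x := by rw [mul_comm, mul_div_assoc, div_self hx.ne, mul_one]

/-- `N x = x Φ(x) + φ(x)`, the numerator of `h`. -/
noncomputable def Nfun (x : ℝ) : ℝ := x * stdNormalCDF x + stdNormalPDF x

lemma hasDerivAt_Nfun (x : ℝ) : HasDerivAt Nfun (stdNormalCDF x) x := by
  have h1 := (hasDerivAt_id x).mul (hasDerivAt_cdf x)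
  have h2 := h1.add (hasDerivAt_pdf x)
  refine h2.congr_deriv ?_
  simp only [id]
  ring

lemma tendsto_mul_cdf_atBot : Tendsto (fun x => x * stdNormalCDF x) atBot (𝓝 0) := by
  have hsq : Tendsto (fun x : ℝ => -(x * stdNormalCDF x)) atBot (𝓝 0) := by
    apply tendsto_of_tendsto_of_tendsto_of_le_of_le' tendsto_const_nhds tendsto_pdf_atBot
    · filter_upwards [Iio_mem_atBot (0:ℝ)] with x hx
      have := mul_pos (neg_pos.2 (mem_Iio.1 hx)) (cdf_pos x)
      simp only [neg_mul] at this ⊢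
      linarith
    · filter_upwards [Iio_mem_atBot (0:ℝ)] with x hx
      have := mills x (mem_Iio.1 hx)
      simpa [neg_mul] using this
  have := hsq.neg
  simpa using this

lemma tendsto_Nfun_atBot : Tendsto Nfun atBot (𝓝 0) := by
  have := tendsto_mul_cdf_atBot.add tendsto_pdf_atBot
  rw [add_zero] at this
  exact this

lemma pos_of_strictMono_tendsto {f : ℝ → ℝ} (hm : StrictMono f)
    (h0 : Tendsto f atBot (𝓝 0)) (x : ℝ) : 0 < f x := by
  have h1 : 0 ≤ f (x - 1) := by
    apply le_of_tendsto h0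
    filter_upwards [Iio_mem_atBot (x - 1)] with y hy
    exact (hm (mem_Iio.1 hy)).le
  have h2 : f (x - 1) < f x := hm (by linarith)
  linarith

lemma strictMono_Nfun : StrictMono Nfun :=
  strictMono_of_deriv_pos fun x => by
    rw [(hasDerivAt_Nfun x).deriv]; exact cdf_pos x

lemma Nfun_pos (x : ℝ) : 0 < Nfun x :=
  pos_of_strictMono_tendsto strictMono_Nfun tendsto_Nfun_atBot x

/-- `g x = Φ(x) + x φ(x)/(1+x²)`. -/
noncomputable def gfun (x : ℝ) : ℝ := stdNormalCDF x + x / (1 + x ^ 2) * stdNormalPDF x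

lemma one_add_sq_pos (x : ℝ) : (0:ℝ) < 1 + x ^ 2 := by positivity

lemma hasDerivAt_gfun (x : ℝ) :
    HasDerivAt gfun (2 * stdNormalPDF x / (1 + x ^ 2) ^ 2) x := by
  have hne : (1 + x ^ 2 : ℝ) ≠ 0 := (one_add_sq_pos x).ne'
  have hden : HasDerivAt (fun t : ℝ => 1 + t ^ 2) (2 * x) x := by
    simpa using (hasDerivAt_pow 2 x).const_add 1
  have hq : HasDerivAt (fun t : ℝ => t / (1 + t ^ 2))
      ((1 * (1 + x ^ 2) - x * (2 * x)) / (1 + x ^ 2) ^ 2) x :=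
    (hasDerivAt_id x).div hden hne
  have h1 := (hasDerivAt_cdf x).add (hq.mul (hasDerivAt_pdf x))
  refine h1.congr_deriv ?_
  field_simp
  ring

lemma tendsto_gfun_atBot : Tendsto gfun atBot (𝓝 0) := by
  have h1 : Tendsto (fun x : ℝ => x / (1 + x ^ 2) * stdNormalPDF x) atBot (𝓝 0) := by
    have hneg : Tendsto (fun x => -stdNormalPDF x) atBot (𝓝 0) := by
      simpa using tendsto_pdf_atBot.neg
    apply tendsto_of_tendsto_of_tendsto_of_le_of_le' hneg tendsto_pdf_atBot
    · filter_upwards with x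
      have hb : |x / (1 + x ^ 2)| ≤ 1 := by
        rw [abs_div, abs_of_pos (one_add_sq_pos x), div_le_one (one_add_sq_pos x)]
        nlinarith [sq_nonneg (|x| - 1), sq_abs x]
      have := neg_abs_le (x / (1 + x ^ 2) * stdNormalPDF x)
      have habs : |x / (1 + x ^ 2) * stdNormalPDF x| ≤ stdNormalPDF x := by
        rw [abs_mul, abs_of_pos (pdf_pos x)]
        nlinarith [pdf_pos x]
      linarith [neg_abs_le (x / (1 + x ^ 2) * stdNormalPDF x)]
    · filter_upwards with x
      have hb : |x / (1 + x ^ 2)| ≤ 1 := by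
        rw [abs_div, abs_of_pos (one_add_sq_pos x), div_le_one (one_add_sq_pos x)]
        nlinarith [sq_nonneg (|x| - 1), sq_abs x]
      have habs : |x / (1 + x ^ 2) * stdNormalPDF x| ≤ stdNormalPDF x := by
        rw [abs_mul, abs_of_pos (pdf_pos x)]
        nlinarith [pdf_pos x]
      linarith [le_abs_self (x / (1 + x ^ 2) * stdNormalPDF x)]
  have := tendsto_cdf_atBot.add h1
  rw [add_zero] at this
  exact this

lemma strictMono_gfun : StrictMono gfun :=
  strictMono_of_deriv_pos fun x => by
    rw [(hasDerivAt_gfun x).deriv]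
    have := pdf_pos x
    positivity

lemma gfun_pos (x : ℝ) : 0 < gfun x :=
  pos_of_strictMono_tendsto strictMono_gfun tendsto_gfun_atBot x

/-- `F x = Φ(x)² − N(x) φ(x)`. -/
noncomputable def Ffun (x : ℝ) : ℝ := stdNormalCDF x ^ 2 - Nfun x * stdNormalPDF x

lemma hasDerivAt_Ffun (x : ℝ) :
    HasDerivAt Ffun (stdNormalPDF x * (1 + x ^ 2) * gfun x) x := by
  have h1 := ((hasDerivAt_cdf x).pow 2).sub ((hasDerivAt_Nfun x).mul (hasDerivAt_pdf x))
  refine h1.congr_deriv ?_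
  unfold Nfun gfun
  have hne : (1 + x ^ 2 : ℝ) ≠ 0 := (one_add_sq_pos x).ne'
  field_simp
  ring

lemma tendsto_Ffun_atBot : Tendsto Ffun atBot (𝓝 0) := by
  have h1 : Tendsto (fun x => stdNormalCDF x ^ 2) atBot (𝓝 0) := by
    have := tendsto_cdf_atBot.mul tendsto_cdf_atBot
    simpa [sq] using this
  have h2 : Tendsto (fun x => Nfun x * stdNormalPDF x) atBot (𝓝 0) := by
    have := tendsto_Nfun_atBot.mul tendsto_pdf_atBot
    simpa using this
  have := h1.sub h2
  rw [sub_zero] at this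
  exact this

lemma strictMono_Ffun : StrictMono Ffun :=
  strictMono_of_deriv_pos fun x => by
    rw [(hasDerivAt_Ffun x).deriv]
    exact mul_pos (mul_pos (pdf_pos x) (one_add_sq_pos x)) (gfun_pos x)

lemma Ffun_pos (x : ℝ) : 0 < Ffun x :=
  pos_of_strictMono_tendsto strictMono_Ffun tendsto_Ffun_atBot x

/-- `H x = N(x)/Φ(x) = x + φ(x)/Φ(x)`, the shifted inverse Mills ratio. -/
noncomputable def Hfun (x : ℝ) : ℝ := Nfun x / stdNormalCDF x

lemma Hfun_eq (x : ℝ) : Hfun x = x + stdNormalPDF x / stdNormalCDF x := by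
  unfold Hfun Nfun
  field_simp [(cdf_pos x).ne']

lemma Hfun_pos (x : ℝ) : 0 < Hfun x :=
  div_pos (Nfun_pos x) (cdf_pos x)

lemma hasDerivAt_Hfun (x : ℝ) :
    HasDerivAt Hfun (Ffun x / stdNormalCDF x ^ 2) x := by
  have h1 := (hasDerivAt_Nfun x).div (hasDerivAt_cdf x) (cdf_pos x).ne'
  refine h1.congr_deriv ?_
  unfold Ffun
  ring

lemma strictMono_Hfun : StrictMono Hfun :=
  strictMono_of_deriv_pos fun x => by
    rw [(hasDerivAt_Hfun x).deriv]
    exact div_pos (Ffun_pos x) (pow_pos (cdf_pos x) 2)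

/-- For the Gaussian-noise sensing model, with
`η(y) = e^{σ²/2 − y} Φ(y/σ − σ)`,
`μ(y) = (y − σ²) η(y) + (σ/√(2π)) e^{−y²/(2σ²)}` and
`h(x) = x + Φ′(x)/Φ(x)`: for every `σ > 0`, the infimum of `μ(y)/η(y)` over
`y > 0` equals `σ h(−σ)`, which is strictly positive. -/
theorem stmt16 (σ : ℝ) (hσ : 0 < σ)
    (η μ h : ℝ → ℝ)
    (hη : ∀ t, η t = Real.exp (σ ^ 2 / 2 - t) * stdNormalCDF (t / σ - σ))
    (hμ : ∀ t, μ t = (t - σ ^ 2) * η t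
        + σ / Real.sqrt (2 * Real.pi) * Real.exp (-t ^ 2 / (2 * σ ^ 2)))
    (hh : ∀ x, h x = x + stdNormalPDF x / stdNormalCDF x) :
    (⨅ t : {t : ℝ // 0 < t}, μ t.1 / η t.1) = σ * h (-σ) ∧ 0 < σ * h (-σ) := by
  have hne : Nonempty {t : ℝ // 0 < t} := ⟨⟨1, one_pos⟩⟩
  have key : ∀ t : ℝ, 0 < t → μ t / η t = σ * Hfun (t / σ - σ) := by
    intro t ht
    have hΦne : stdNormalCDF (t / σ - σ) ≠ 0 := (cdf_pos _).ne'
    have hexppos : (0:ℝ) < Real.exp (σ ^ 2 / 2 - t) := Real.exp_pos _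
    have e1 : (σ ^ 2 / 2 - t) + (-(t / σ - σ) ^ 2 / 2) = -t ^ 2 / (2 * σ ^ 2) := by
      field_simp
      ring
    have hexp : σ / Real.sqrt (2 * Real.pi) * Real.exp (-t ^ 2 / (2 * σ ^ 2))
        = σ * (Real.exp (σ ^ 2 / 2 - t) * stdNormalPDF (t / σ - σ)) := by
      unfold stdNormalPDF
      rw [← e1, Real.exp_add]
      ring
    have hX : σ * (t / σ - σ) = t - σ ^ 2 := by
      field_simp
    rw [hμ t, hη t, Hfun_eq, hexp, div_eq_iff (mul_ne_zero hexppos.ne' hΦne), ← hX]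
    set X := t / σ - σ with hXdef
    field_simp
  have hcH : σ * h (-σ) = σ * Hfun (-σ) := by rw [hh, ← Hfun_eq]
  have hlb : ∀ p : {t : ℝ // 0 < t}, σ * h (-σ) ≤ μ p.1 / η p.1 := by
    rintro ⟨t, ht⟩
    rw [key t ht, hcH]
    refine mul_le_mul_of_nonneg_left ?_ hσ.le
    have hlt : -σ < t / σ - σ := by
      have : 0 < t / σ := div_pos ht hσ
      linarith
    exact (strictMono_Hfun hlt).le
  have hbdd : BddBelow (Set.range fun p : {t : ℝ // 0 < t} => μ p.1 / η p.1) :=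
    ⟨σ * h (-σ), by rintro _ ⟨p, rfl⟩; exact hlb p⟩
  refine ⟨le_antisymm ?_ (le_ciInf hlb), ?_⟩
  · apply le_of_forall_pos_le_add
    intro ε hε
    have h1 : Tendsto (fun t : ℝ => t / σ - σ) (𝓝[>] (0:ℝ)) (𝓝 (-σ)) := by
      have hc : Continuous (fun t : ℝ => t / σ - σ) := by fun_prop
      have := hc.tendsto (0:ℝ)
      have h0 : ((0:ℝ) / σ - σ) = -σ := by rw [zero_div]; ring
      rw [h0] at this
      exact this.mono_left nhdsWithin_le_nhds
    have h2 : Tendsto (fun t : ℝ => σ * Hfun (t / σ - σ)) (𝓝[>] (0:ℝ)) (𝓝 (σ * Hfun (-σ))) :=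
      ((hasDerivAt_Hfun (-σ)).continuousAt.tendsto.comp h1).const_mul σ
    have hev : ∀ᶠ t in 𝓝[>] (0:ℝ), σ * Hfun (t / σ - σ) < σ * h (-σ) + ε := by
      rw [hcH]
      exact h2.eventually_lt_const (by linarith)
    obtain ⟨t, hlt, htpos⟩ := (hev.and self_mem_nhdsWithin).exists
    calc (⨅ p : {t : ℝ // 0 < t}, μ p.1 / η p.1) ≤ μ t / η t := ciInf_le hbdd ⟨t, htpos⟩
      _ = σ * Hfun (t / σ - σ) := key t htpos
      _ ≤ σ * h (-σ) + ε := hlt.le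
  · rw [hcH]
    exact mul_pos hσ (Hfun_pos _)
end

section
/- Fix β > 0, ε ∈ (0, 1), and α > 0, and define L(v) = ∫ max{ v (μ(y) − η(y)) / (η(y) + μ(y)/β), −1 + ε } · (μ(y) − η(y)) dy for v ≥ 0 (integrand taken to be 0 where η + μ/β = 0). If the set {y : μ(y) > η(y)} has positive measure and ∫_{{μ>η}} (μ(y) − η(y))²/(η(y) + μ(y)/β) dy > 0, then L is nondecreasing on [0, ∞), L(0) = 0, L(v) → ∞ as v → ∞, and there exists a unique v > 0 with L(v) = 1/α. -/
open MeasureTheory Filter Topology Set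

noncomputable def rr (η μ : ℝ → ℝ) (β y : ℝ) : ℝ :=
  if η y + μ y / β = 0 then 0 else (μ y - η y) / (η y + μ y / β)

noncomputable def qq (η μ : ℝ → ℝ) (β y : ℝ) : ℝ :=
  if η y + μ y / β = 0 then 0 else (μ y - η y) ^ 2 / (η y + μ y / β)

lemma qq_eq (η μ : ℝ → ℝ) (β y : ℝ) : qq η μ β y = rr η μ β y * (μ y - η y) := by
  unfold qq rr
  by_cases h : η y + μ y / β = 0 <;> simp [h] <;> ring

lemma rr_meas (η μ : ℝ → ℝ) (β : ℝ) (hηm : Measurable η) (hμm : Measurable μ) :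
    Measurable (rr η μ β) := by
  unfold rr
  have hdm : Measurable (fun y => η y + μ y / β) := hηm.add (hμm.div_const β)
  exact Measurable.ite (hdm (measurableSet_singleton 0)) measurable_const
    ((hμm.sub hηm).div hdm)

lemma qq_meas (η μ : ℝ → ℝ) (β : ℝ) (hηm : Measurable η) (hμm : Measurable μ) :
    Measurable (qq η μ β) := by
  unfold qq
  have hdm : Measurable (fun y => η y + μ y / β) := hηm.add (hμm.div_const β)
  exact Measurable.ite (hdm (measurableSet_singleton 0)) measurable_const
    (((hμm.sub hηm).pow_const 2).div hdm)

lemma rr_le (η μ : ℝ → ℝ) (β y : ℝ) (hη0 : 0 ≤ η y) (hμ0 : 0 ≤ μ y) (hβ : 0 < β) :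
    rr η μ β y ≤ β := by
  unfold rr
  by_cases h : η y + μ y / β = 0
  · simpa [h] using hβ.le
  · have hd : 0 < η y + μ y / β :=
      lt_of_le_of_ne (add_nonneg hη0 (div_nonneg hμ0 hβ.le)) (Ne.symm h)
    rw [if_neg h, div_le_iff₀ hd]
    have : β * (μ y / β) = μ y := by field_simp
    nlinarith [hβ.le, hη0]

lemma neg_one_le_rr (η μ : ℝ → ℝ) (β y : ℝ) (hη0 : 0 ≤ η y) (hμ0 : 0 ≤ μ y) (hβ : 0 < β) :
    -1 ≤ rr η μ β y := by
  unfold rr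
  by_cases h : η y + μ y / β = 0
  · simp [h]
  · have hd : 0 < η y + μ y / β :=
      lt_of_le_of_ne (add_nonneg hη0 (div_nonneg hμ0 hβ.le)) (Ne.symm h)
    rw [if_neg h, le_div_iff₀ hd]
    have : 0 ≤ μ y / β := div_nonneg hμ0 hβ.le
    nlinarith

lemma rr_abs_le (η μ : ℝ → ℝ) (β y : ℝ) (hη0 : 0 ≤ η y) (hμ0 : 0 ≤ μ y) (hβ : 0 < β) :
    |rr η μ β y| ≤ max β 1 := by
  rw [abs_le]
  constructor
  · have := neg_one_le_rr η μ β y hη0 hμ0 hβ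
    have h1 : (1:ℝ) ≤ max β 1 := le_max_right _ _
    linarith
  · exact (rr_le η μ β y hη0 hμ0 hβ).trans (le_max_left _ _)

lemma rr_pos (η μ : ℝ → ℝ) (β y : ℝ) (hη0 : 0 ≤ η y) (hβ : 0 < β) (hy : η y < μ y) :
    0 < rr η μ β y := by
  have hμpos : 0 < μ y := lt_of_le_of_lt hη0 hy
  have hd : 0 < η y + μ y / β := add_pos_of_nonneg_of_pos hη0 (div_pos hμpos hβ)
  unfold rr
  rw [if_neg hd.ne']
  exact div_pos (sub_pos.2 hy) hd

lemma rr_nonpos (η μ : ℝ → ℝ) (β y : ℝ) (hη0 : 0 ≤ η y) (hμ0 : 0 ≤ μ y) (hβ : 0 < β)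
    (hy : μ y ≤ η y) : rr η μ β y ≤ 0 := by
  unfold rr
  by_cases h : η y + μ y / β = 0
  · simp [h]
  · have hd : 0 < η y + μ y / β :=
      lt_of_le_of_ne (add_nonneg hη0 (div_nonneg hμ0 hβ.le)) (Ne.symm h)
    rw [if_neg h]
    exact div_nonpos_of_nonpos_of_nonneg (by linarith) hd.le

/-- Properties of the linear-constraint functional
`L(v) = ∫ max{v (μ(y) − η(y))/(η(y) + μ(y)/β), −1 + ε} (μ(y) − η(y)) dy`
(integrand ratio taken to be `0` where `η + μ/β = 0`): if `{μ > η}` has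
positive measure and `∫_{{μ>η}} (μ − η)²/(η + μ/β) > 0`, then `L` is
nondecreasing on `[0, ∞)`, `L(0) = 0`, `L(v) → ∞` as `v → ∞`, and there is a
unique `v > 0` with `L(v) = 1/α`. -/
theorem stmt17 (η μ : ℝ → ℝ) (hηm : Measurable η) (hμm : Measurable μ)
    (hη0 : ∀ y, 0 ≤ η y) (hμ0 : ∀ y, 0 ≤ μ y)
    (hη1 : ∫ y, η y = 1) (hμ1 : ∫ y, μ y = 1)
    (β ε α : ℝ) (hβ : 0 < β) (hε : ε ∈ Ioo (0:ℝ) 1) (hα : 0 < α)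
    (hpos : 0 < volume {y | η y < μ y})
    (hIpos : 0 < ∫ y in {y | η y < μ y},
        (if η y + μ y / β = 0 then 0 else (μ y - η y) ^ 2 / (η y + μ y / β)))
    (L : ℝ → ℝ)
    (hL : ∀ v, L v = ∫ y,
        max (v * (if η y + μ y / β = 0 then 0 else (μ y - η y) / (η y + μ y / β)))
            (-1 + ε) * (μ y - η y)) :
    MonotoneOn L (Ici 0) ∧ L 0 = 0 ∧ Tendsto L atTop atTop ∧
    ∃! v : ℝ, 0 < v ∧ L v = 1 / α := by
  obtain ⟨hε0, hε1⟩ := hε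
  have hηint : Integrable η := by
    by_contra h
    rw [integral_undef h] at hη1; exact one_ne_zero hη1.symm
  have hμint : Integrable μ := by
    by_contra h
    rw [integral_undef h] at hμ1; exact one_ne_zero hμ1.symm
  have hL' : ∀ v, L v = ∫ y, max (v * rr η μ β y) (-1 + ε) * (μ y - η y) := hL
  have hSm : MeasurableSet {y | η y < μ y} := measurableSet_lt hηm hμm
  have hIpos' : 0 < ∫ y in {y | η y < μ y}, qq η μ β y := hIpos
  set I : ℝ := ∫ y in {y | η y < μ y}, qq η μ β y with hIdef
  have hrm : Measurable (rr η μ β) := rr_meas η μ β hηm hμm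
  have hrabs : ∀ y, |rr η μ β y| ≤ max β 1 :=
    fun y => rr_abs_le η μ β y (hη0 y) (hμ0 y) hβ
  have hM1 : (1:ℝ) ≤ max β 1 := le_max_right _ _
  have hsumint : Integrable (fun y => η y + μ y) := hηint.add hμint
  have hsum2 : (∫ y, (η y + μ y)) = 2 := by
    rw [integral_add hηint hμint, hη1, hμ1]; norm_num
  -- integrability of the integrand for each v
  have hfm : ∀ v : ℝ, Measurable (fun y => max (v * rr η μ β y) (-1 + ε) * (μ y - η y)) :=
    fun v => ((measurable_const.mul hrm).max measurable_const).mul (hμm.sub hηm)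
  have habsmax : ∀ v : ℝ, ∀ y, |max (v * rr η μ β y) (-1 + ε)| ≤ max (|v| * max β 1) 1 := by
    intro v y
    refine (abs_max_le_max_abs_abs).trans (max_le_max ?_ ?_)
    · rw [abs_mul]
      exact mul_le_mul_of_nonneg_left (hrabs y) (abs_nonneg v)
    · rw [abs_of_neg (by linarith : (-1:ℝ) + ε < 0)]
      linarith
  have habsf : ∀ v : ℝ, ∀ y,
      |max (v * rr η μ β y) (-1 + ε) * (μ y - η y)| ≤ max (|v| * max β 1) 1 * (η y + μ y) := by
    intro v y
    rw [abs_mul]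
    refine mul_le_mul (habsmax v y) ?_ (abs_nonneg _) ?_
    · have := hη0 y; have := hμ0 y
      rw [abs_sub_comm, abs_le]; constructor <;> linarith
    · exact le_trans (by norm_num) (le_max_right _ _)
  have hfint : ∀ v : ℝ,
      Integrable (fun y => max (v * rr η μ β y) (-1 + ε) * (μ y - η y)) := by
    intro v
    refine (hsumint.const_mul (max (|v| * max β 1) 1)).mono'
      (hfm v).aestronglyMeasurable (Filter.Eventually.of_forall fun y => ?_)
    simpa only [Real.norm_eq_abs] using habsf v y
  have hqint : Integrable (qq η μ β) := by
    refine (hsumint.const_mul (max β 1)).mono'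
      (qq_meas η μ β hηm hμm).aestronglyMeasurable
      (Filter.Eventually.of_forall fun y => ?_)
    rw [Real.norm_eq_abs, qq_eq, abs_mul]
    have := hη0 y; have := hμ0 y
    refine mul_le_mul (hrabs y) ?_ (abs_nonneg _) (by linarith)
    rw [abs_sub_comm, abs_le]; constructor <;> linarith
  -- key quantitative monotonicity
  have key : ∀ v₁ v₂ : ℝ, 0 ≤ v₁ → v₁ ≤ v₂ → L v₁ + (v₂ - v₁) * I ≤ L v₂ := by
    intro v₁ v₂ h1 h12
    have hpt : ∀ y, ({y | η y < μ y}).indicator (fun y => (v₂ - v₁) * qq η μ β y) y ≤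
        max (v₂ * rr η μ β y) (-1 + ε) * (μ y - η y) -
        max (v₁ * rr η μ β y) (-1 + ε) * (μ y - η y) := by
      intro y
      by_cases hy : y ∈ {y | η y < μ y}
      · rw [Set.indicator_of_mem hy]
        have hrpos : 0 < rr η μ β y := rr_pos η μ β y (hη0 y) hβ hy
        have hmax : ∀ v : ℝ, 0 ≤ v → max (v * rr η μ β y) (-1 + ε) = v * rr η μ β y :=
          fun v hv => max_eq_left ((by linarith : (-1:ℝ) + ε ≤ 0).trans
            (mul_nonneg hv hrpos.le))
        rw [hmax v₁ h1, hmax v₂ (h1.trans h12), qq_eq]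
        exact le_of_eq (by ring)
      · rw [Set.indicator_of_notMem hy]
        have hμη : μ y ≤ η y := not_lt.1 hy
        have hrnp : rr η μ β y ≤ 0 := rr_nonpos η μ β y (hη0 y) (hμ0 y) hβ hμη
        have h2 : v₂ * rr η μ β y ≤ v₁ * rr η μ β y :=
          mul_le_mul_of_nonpos_right h12 hrnp
        have h3 : max (v₂ * rr η μ β y) (-1 + ε) ≤ max (v₁ * rr η μ β y) (-1 + ε) :=
          max_le_max h2 le_rfl
        have := mul_le_mul_of_nonpos_right h3 (by linarith : μ y - η y ≤ 0)
        linarith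
    have hind : Integrable (({y | η y < μ y}).indicator (fun y => (v₂ - v₁) * qq η μ β y)) :=
      (hqint.const_mul (v₂ - v₁)).indicator hSm
    have hmono := integral_mono hind ((hfint v₂).sub (hfint v₁)) hpt
    simp only [Pi.sub_apply] at hmono
    rw [integral_indicator hSm, integral_const_mul,
      integral_sub (hfint v₂) (hfint v₁)] at hmono
    rw [hL' v₁, hL' v₂]
    linarith
  -- L 0 = 0
  have hL0 : L 0 = 0 := by
    rw [hL' 0]
    have : (fun y => max (0 * rr η μ β y) (-1 + ε) * (μ y - η y)) = fun _ => (0:ℝ) := by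
      funext y
      rw [zero_mul, max_eq_left (by linarith : (-1:ℝ) + ε ≤ 0), zero_mul]
    rw [this, integral_zero]
  -- lower bound L v ≥ v * I for v ≥ 0
  have hlow : ∀ v : ℝ, 0 ≤ v → v * I ≤ L v := by
    intro v hv
    have := key 0 v le_rfl hv
    rw [hL0] at this; linarith
  -- monotone
  have hmonoL : MonotoneOn L (Ici 0) := by
    intro a ha b _ hab
    have := key a b ha hab
    nlinarith [hIpos']
  refine ⟨hmonoL, hL0, ?_, ?_⟩
  · -- tendsto atTop
    refine tendsto_atTop_mono' atTop ?_ (Tendsto.atTop_mul_const hIpos' tendsto_id)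
    filter_upwards [eventually_ge_atTop (0:ℝ)] with v hv
    exact hlow v hv
  · -- existence and uniqueness
    have hαpos : 0 < 1 / α := by positivity
    set V : ℝ := (1 / α) / I with hVdef
    have hV : 0 < V := div_pos hαpos hIpos'
    have hLV : 1 / α ≤ L V := by
      have := hlow V hV.le
      rw [div_mul_cancel₀ _ hIpos'.ne'] at this
      exact this
    -- continuity of L
    have hlip : ∀ a b : ℝ, |L a - L b| ≤ 2 * max β 1 * |a - b| := by
      intro a b
      have hptw : ∀ y, |max (a * rr η μ β y) (-1 + ε) * (μ y - η y) -
          max (b * rr η μ β y) (-1 + ε) * (μ y - η y)| ≤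
          (|a - b| * max β 1) * (η y + μ y) := by
        intro y
        rw [← sub_mul, abs_mul]
        have h1 : |max (a * rr η μ β y) (-1 + ε) - max (b * rr η μ β y) (-1 + ε)| ≤
            |a - b| * max β 1 := by
          refine (abs_max_sub_max_le_abs _ _ _).trans ?_
          rw [← sub_mul, abs_mul]
          exact mul_le_mul_of_nonneg_left (hrabs y) (abs_nonneg _)
        have h2 : |μ y - η y| ≤ η y + μ y := by
          have := hη0 y; have := hμ0 y
          rw [abs_sub_comm, abs_le]; constructor <;> linarith
        exact mul_le_mul h1 h2 (abs_nonneg _)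
          (mul_nonneg (abs_nonneg _) (by linarith))
      have hsubint : Integrable (fun y =>
          max (a * rr η μ β y) (-1 + ε) * (μ y - η y) -
          max (b * rr η μ β y) (-1 + ε) * (μ y - η y)) := by
        have := (hfint a).sub (hfint b)
        exact this
      have hBint : Integrable (fun y => (|a - b| * max β 1) * (η y + μ y)) :=
        hsumint.const_mul _
      have hB2 : (∫ y, (|a - b| * max β 1) * (η y + μ y)) = 2 * max β 1 * |a - b| := by
        rw [integral_const_mul, hsum2]; ring
      have hup : (∫ y, (max (a * rr η μ β y) (-1 + ε) * (μ y - η y) -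
          max (b * rr η μ β y) (-1 + ε) * (μ y - η y))) ≤ 2 * max β 1 * |a - b| := by
        rw [← hB2]
        exact integral_mono hsubint hBint fun y => (le_abs_self _).trans (hptw y)
      have hdown : -(2 * max β 1 * |a - b|) ≤
          ∫ y, (max (a * rr η μ β y) (-1 + ε) * (μ y - η y) -
          max (b * rr η μ β y) (-1 + ε) * (μ y - η y)) := by
        rw [← hB2, ← integral_neg]
        refine integral_mono hBint.neg hsubint fun y => ?_
        have := hptw y
        have h3 := neg_abs_le (max (a * rr η μ β y) (-1 + ε) * (μ y - η y) -
          max (b * rr η μ β y) (-1 + ε) * (μ y - η y))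
        simp only [Pi.neg_apply]
        linarith
      rw [hL' a, hL' b, ← integral_sub (hfint a) (hfint b)]
      rw [abs_le]
      constructor
      · linarith
      · linarith
    have hcont : Continuous L := by
      have hK : (0:ℝ) ≤ 2 * max β 1 := by linarith
      refine LipschitzWith.continuous (K := ⟨2 * max β 1, hK⟩)
        (LipschitzWith.of_dist_le_mul fun a b => ?_)
      rw [Real.dist_eq, Real.dist_eq]
      exact hlip a b
    have hivt := intermediate_value_Icc hV.le hcont.continuousOn
    have hmem : (1 / α) ∈ Icc (L 0) (L V) := by
      rw [hL0]; exact ⟨hαpos.le, hLV⟩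
    obtain ⟨v, hvmem, hveq⟩ := hivt hmem
    have hv0 : 0 < v := by
      rcases lt_or_eq_of_le hvmem.1 with h | h
      · exact h
      · exfalso; rw [← h] at hveq; rw [hL0] at hveq; linarith
    refine ⟨v, ⟨hv0, hveq⟩, ?_⟩
    rintro w ⟨hw0, hweq⟩
    by_contra hne
    rcases lt_or_gt_of_ne hne with h | h
    · have := key w v hw0.le h.le
      rw [hweq, hveq] at this
      nlinarith [hIpos']
    · have := key v w hv0.le h.le
      rw [hweq, hveq] at this
      nlinarith [hIpos']
end

section
/- Fix α > 0, β > 0, and ε ∈ (0, 1). Set c*(y) = (μ(y) − η(y))/(η(y) + μ(y)/β) (taken to be 0 where η + μ/β = 0) and suppose ∫ c*(y)(μ(y) − η(y)) dy = 1/α and I := ∫_{{μ>η}} (μ(y) − η(y))²/(η(y) + μ(y)/β) dy > 0. Let v_ε be the unique positive number such that ∫ max{ v_ε c*(y), −1 + ε } (μ(y) − η(y)) dy = 1/α. Then 1 ≤ v_ε ≤ 1 + 2ε/I; in particular v_ε → 1 as ε → 0⁺. -/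
open MeasureTheory Filter Topology Set

set_option maxHeartbeats 1000000 in
/-- With `c*(y) = (μ(y) − η(y))/(η(y) + μ(y)/β)` (taken `0` where
`η + μ/β = 0`), `∫ c* (μ − η) = 1/α`, and
`I = ∫_{{μ>η}} (μ − η)²/(η + μ/β) > 0`: if for each `ε ∈ (0,1)` the number
`v ε` is positive and satisfies `∫ max{v ε ⬝ c*, −1 + ε} (μ − η) = 1/α`, then
`1 ≤ v ε ≤ 1 + 2ε/I`; in particular `v ε → 1` as `ε → 0⁺`. -/
theorem stmt18 (η μ : ℝ → ℝ) (hηm : Measurable η) (hμm : Measurable μ)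
    (hη0 : ∀ y, 0 ≤ η y) (hμ0 : ∀ y, 0 ≤ μ y)
    (hη1 : ∫ y, η y = 1) (hμ1 : ∫ y, μ y = 1)
    (α β : ℝ) (hα : 0 < α) (hβ : 0 < β)
    (hpos : 0 < volume {y | η y < μ y})
    (cstar : ℝ → ℝ)
    (hcs : cstar = fun y =>
        if η y + μ y / β = 0 then 0 else (μ y - η y) / (η y + μ y / β))
    (hclb : ∀ y, -1 ≤ cstar y) (hcub : ∀ y, cstar y ≤ β)
    (hconstr : ∫ y, cstar y * (μ y - η y) = 1 / α)
    (I : ℝ)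
    (hI : I = ∫ y in {y | η y < μ y},
        (if η y + μ y / β = 0 then 0 else (μ y - η y) ^ 2 / (η y + μ y / β)))
    (hIpos : 0 < I)
    (v : ℝ → ℝ)
    (hv : ∀ ε ∈ Ioo (0:ℝ) 1, 0 < v ε ∧
        ∫ y, max (v ε * cstar y) (-1 + ε) * (μ y - η y) = 1 / α) :
    (∀ ε ∈ Ioo (0:ℝ) 1, 1 ≤ v ε ∧ v ε ≤ 1 + 2 * ε / I) ∧
    Tendsto v (𝓝[>] 0) (𝓝 1) := by
  have hηint : Integrable η := by
    by_contra h
    rw [integral_undef h] at hη1; norm_num at hη1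
  have hμint : Integrable μ := by
    by_contra h
    rw [integral_undef h] at hμ1; norm_num at hμ1
  have hfint : Integrable (fun y => μ y - η y) := hμint.sub hηint
  have hcseq : ∀ y, cstar y =
      if η y + μ y / β = 0 then 0 else (μ y - η y) / (η y + μ y / β) := by
    intro y; rw [hcs]
  have hcm : Measurable cstar := by
    rw [hcs]
    exact Measurable.ite
      ((hηm.add (hμm.div_const β)) (measurableSet_singleton 0))
      measurable_const ((hμm.sub hηm).div (hηm.add (hμm.div_const β)))
  set B : ℝ := max 1 β with hB
  have hB1 : (1:ℝ) ≤ B := le_max_left 1 β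
  have hcabs : ∀ y, ‖cstar y‖ ≤ B := by
    intro y
    rw [Real.norm_eq_abs, abs_le]
    exact ⟨by nlinarith [hclb y], le_trans (hcub y) (le_max_right 1 β)⟩
  have hcf_int : Integrable (fun y => cstar y * (μ y - η y)) :=
    hfint.bdd_mul hcm.aestronglyMeasurable (c := B) (ae_of_all _ hcabs)
  have hden : ∀ y, 0 ≤ η y + μ y / β :=
    fun y => add_nonneg (hη0 y) (div_nonneg (hμ0 y) hβ.le)
  have hden0 : ∀ y, η y + μ y / β = 0 → μ y - η y = 0 := by
    intro y h
    have h1 : μ y / β = 0 := by nlinarith [hη0 y, div_nonneg (hμ0 y) hβ.le]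
    have h2 : μ y = 0 := by
      rcases div_eq_zero_iff.1 h1 with h2 | h2
      · exact h2
      · exact absurd h2 hβ.ne'
    have h3 : η y = 0 := by nlinarith [div_nonneg (hμ0 y) hβ.le]
    rw [h2, h3]; ring
  have hdenS : ∀ y, η y < μ y → 0 < η y + μ y / β := by
    intro y hy
    have : 0 < μ y := lt_of_le_of_lt (hη0 y) hy
    have : 0 < μ y / β := div_pos this hβ
    linarith [hη0 y]
  have hcposS : ∀ y, η y < μ y → 0 < cstar y := by
    intro y hy
    rw [hcseq y, if_neg (hdenS y hy).ne']
    exact div_pos (sub_pos.2 hy) (hdenS y hy)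
  have hcnonposC : ∀ y, ¬ η y < μ y → cstar y ≤ 0 := by
    intro y hy
    rw [hcseq y]
    split_ifs with h
    · exact le_refl 0
    · exact div_nonpos_iff.2 (Or.inr ⟨sub_nonpos.2 (not_lt.1 hy), hden y⟩)
  have hSm : MeasurableSet {y | η y < μ y} := measurableSet_lt hηm hμm
  -- main bounds
  have main : ∀ ε ∈ Ioo (0:ℝ) 1, 1 ≤ v ε ∧ v ε ≤ 1 + 2 * ε / I := by
    intro ε hε
    obtain ⟨hε0, hε1⟩ := hε
    obtain ⟨hvpos, hveq⟩ := hv ε ⟨hε0, hε1⟩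
    have hmax_int : Integrable
        (fun y => max (v ε * cstar y) (-1 + ε) * (μ y - η y)) := by
      refine hfint.bdd_mul ((measurable_const.mul hcm).max
        measurable_const).aestronglyMeasurable (c := v ε * B + 1) (ae_of_all _ ?_)
      intro x
      have h1 := hcabs x
      rw [Real.norm_eq_abs] at h1 ⊢
      rw [abs_le] at h1 ⊢
      constructor
      · have : -1 + ε ≤ max (v ε * cstar x) (-1 + ε) := le_max_right _ _
        nlinarith
      · refine max_le ?_ (by nlinarith)
        nlinarith
    -- Part 1 : 1 ≤ v ε
    have hv1 : 1 ≤ v ε := by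
      by_contra hlt
      push_neg at hlt
      set g : ℝ → ℝ := fun y =>
        cstar y * (μ y - η y) - max (v ε * cstar y) (-1 + ε) * (μ y - η y)
        with hg
      have hgint : Integrable g := hcf_int.sub hmax_int
      have hg0 : 0 ≤ g := by
        intro y
        simp only [hg, Pi.zero_apply]
        rcases lt_trichotomy (η y) (μ y) with h | h | h
        · have hc := hcposS y h
          have hmle : max (v ε * cstar y) (-1 + ε) ≤ cstar y :=
            max_le (by nlinarith) (by nlinarith)
          nlinarith
        · have hf0 : μ y - η y = 0 := by rw [h]; ring
          rw [hf0]; ring_nf; exact le_refl 0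
        · have hc := hcnonposC y (by exact not_lt.2 h.le)
          have hf0 : μ y - η y ≤ 0 := by linarith
          have hmge : cstar y ≤ max (v ε * cstar y) (-1 + ε) :=
            le_trans (by nlinarith) (le_max_left _ _)
          nlinarith
      have hsupp : {y | η y < μ y} ⊆ Function.support g := by
        intro y hy
        have h : η y < μ y := hy
        have hc := hcposS y h
        have hmlt : max (v ε * cstar y) (-1 + ε) < cstar y :=
          max_lt (by nlinarith) (by nlinarith)
        have : 0 < g y := by
          simp only [hg]
          nlinarith
        exact this.ne'
      have hpos' : 0 < ∫ y, g y :=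
        (integral_pos_iff_support_of_nonneg hg0 hgint).2
          (lt_of_lt_of_le hpos (measure_mono hsupp))
      have hzero : ∫ y, g y = 0 := by
        simp only [hg]
        rw [integral_sub hcf_int hmax_int, hconstr, hveq, sub_self]
      rw [hzero] at hpos'
      exact lt_irrefl 0 hpos'
    refine ⟨hv1, ?_⟩
    -- Part 2 : v ε ≤ 1 + 2ε/I
    have hgint : Integrable (fun y =>
        (max (v ε * cstar y) (-1 + ε) - cstar y) * (μ y - η y)) := by
      have := hmax_int.sub hcf_int
      refine this.congr (ae_of_all _ fun y => ?_)
      simp only [Pi.sub_apply]; ring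
    have hzero : ∫ y,
        (max (v ε * cstar y) (-1 + ε) - cstar y) * (μ y - η y) = 0 := by
      have h1 : ∫ y, (max (v ε * cstar y) (-1 + ε) * (μ y - η y)
          - cstar y * (μ y - η y)) = 0 := by
        rw [integral_sub hmax_int hcf_int, hveq, hconstr, sub_self]
      rw [← h1]
      congr 1; funext y; ring
    have hsplit :
        (∫ y in {y | η y < μ y},
          (max (v ε * cstar y) (-1 + ε) - cstar y) * (μ y - η y))
        + ∫ y in {y | η y < μ y}ᶜ,
          (max (v ε * cstar y) (-1 + ε) - cstar y) * (μ y - η y) = 0 := by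
      rw [integral_add_compl hSm hgint, hzero]
    have hSeq : ∫ y in {y | η y < μ y},
        (max (v ε * cstar y) (-1 + ε) - cstar y) * (μ y - η y)
        = (v ε - 1) * I := by
      rw [hI, ← integral_const_mul]
      apply setIntegral_congr_fun hSm
      intro y hy
      have h : η y < μ y := hy
      have hd := hdenS y h
      dsimp only
      rw [hcseq y, if_neg hd.ne', if_neg hd.ne']
      have hc : 0 < (μ y - η y) / (η y + μ y / β) :=
        div_pos (sub_pos.2 h) hd
      rw [max_eq_left (by nlinarith)]
      field_simp
    have hcompl : (v ε - 1) * I ≤ ε := by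
      have heq : (v ε - 1) * I = ∫ y in {y | η y < μ y}ᶜ,
          -((max (v ε * cstar y) (-1 + ε) - cstar y) * (μ y - η y)) := by
        rw [integral_neg]
        linarith [hsplit, hSeq]
      rw [heq]
      have hmono : ∫ y in {y | η y < μ y}ᶜ,
          -((max (v ε * cstar y) (-1 + ε) - cstar y) * (μ y - η y))
          ≤ ∫ y in {y | η y < μ y}ᶜ, ε * η y := by
        apply setIntegral_mono_on hgint.neg.integrableOn
          (hηint.const_mul ε).integrableOn hSm.compl
        intro y hy
        have hy' : ¬ η y < μ y := hy
        have hfle : μ y - η y ≤ 0 := sub_nonpos.2 (not_lt.1 hy')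
        have hcle := hcnonposC y hy'
        have hclb' := hclb y
        have hmaxle : max (v ε * cstar y) (-1 + ε) ≤ cstar y + ε :=
          max_le (by nlinarith) (by linarith)
        simp only [Pi.neg_apply]
        nlinarith [mul_nonneg (sub_nonneg.2 hmaxle) (neg_nonneg.2 hfle),
          mul_nonneg hε0.le (hμ0 y)]
      calc _ ≤ ∫ y in {y | η y < μ y}ᶜ, ε * η y := hmono
        _ = ε * ∫ y in {y | η y < μ y}ᶜ, η y := by rw [integral_const_mul]
        _ ≤ ε * 1 := by
            apply mul_le_mul_of_nonneg_left _ hε0.le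
            rw [← hη1]
            exact setIntegral_le_integral hηint (ae_of_all _ hη0)
        _ = ε := mul_one ε
    have : v ε - 1 ≤ 2 * ε / I := by
      rw [le_div_iff₀ hIpos]
      nlinarith
    linarith
  refine ⟨main, ?_⟩
  have hub : Tendsto (fun ε : ℝ => 1 + 2 * ε / I) (𝓝[>] 0) (𝓝 1) := by
    have hc : Continuous (fun ε : ℝ => 1 + 2 * ε / I) := by fun_prop
    have := (hc.tendsto 0).mono_left (nhdsWithin_le_nhds (s := Ioi (0:ℝ)))
    simpa using this
  have hmem : Ioo (0:ℝ) 1 ∈ 𝓝[>] (0:ℝ) :=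
    Ioo_mem_nhdsGT_of_mem ⟨le_refl 0, one_pos⟩
  refine tendsto_of_tendsto_of_tendsto_of_le_of_le' tendsto_const_nhds hub ?_ ?_
  · filter_upwards [hmem] with x hx
    exact (main x hx).1
  · filter_upwards [hmem] with x hx
    exact (main x hx).2
end

section
/- Fix α > 0, β > 0. Set c*(y) = (μ(y) − η(y))/(η(y) + μ(y)/β) (taken to be 0 where η + μ/β = 0) and suppose ∫ c*(y)(μ(y) − η(y)) dy = 1/α and ∫_{{μ>η}} (μ(y) − η(y))²/(η(y) + μ(y)/β) dy > 0. For each ε ∈ (0, 1), let v_ε be the unique positive number such that c_ε(y) = max{ v_ε c*(y), −1 + ε } satisfies ∫ c_ε(y)(μ(y) − η(y)) dy = 1/α. Then lim_{ε → 0⁺} ∫ c_ε(y)² η(y) dy = ∫ c*(y)² η(y) dy and lim_{ε → 0⁺} ∫ c_ε(y)² μ(y) dy = ∫ c*(y)² μ(y) dy. -/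
open MeasureTheory Filter Topology Set

set_option maxHeartbeats 2000000 in
/-- With `c*(y) = (μ(y) − η(y))/(η(y) + μ(y)/β)` (taken `0` where
`η + μ/β = 0`), `∫ c* (μ − η) = 1/α`, and `∫_{{μ>η}} (μ − η)²/(η + μ/β) > 0`:
if for each `ε ∈ (0,1)` the number `v ε` is the (unique) positive number such
that `c_ε = max{v ε ⬝ c*, −1 + ε}` satisfies `∫ c_ε (μ − η) = 1/α`, then
`∫ c_ε² η → ∫ c*² η` and `∫ c_ε² μ → ∫ c*² μ` as `ε → 0⁺`. -/
theorem stmt19 (η μ : ℝ → ℝ) (hηm : Measurable η) (hμm : Measurable μ)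
    (hη0 : ∀ y, 0 ≤ η y) (hμ0 : ∀ y, 0 ≤ μ y)
    (hη1 : ∫ y, η y = 1) (hμ1 : ∫ y, μ y = 1)
    (α β : ℝ) (hα : 0 < α) (hβ : 0 < β)
    (hpos : 0 < volume {y | η y < μ y})
    (cstar : ℝ → ℝ)
    (hcs : cstar = fun y =>
        if η y + μ y / β = 0 then 0 else (μ y - η y) / (η y + μ y / β))
    (hclb : ∀ y, -1 ≤ cstar y) (hcub : ∀ y, cstar y ≤ β)
    (hconstr : ∫ y, cstar y * (μ y - η y) = 1 / α)
    (hIpos : 0 < ∫ y in {y | η y < μ y},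
        (if η y + μ y / β = 0 then 0 else (μ y - η y) ^ 2 / (η y + μ y / β)))
    (v : ℝ → ℝ)
    (hv : ∀ ε ∈ Ioo (0:ℝ) 1, 0 < v ε ∧
        ∫ y, max (v ε * cstar y) (-1 + ε) * (μ y - η y) = 1 / α) :
    Tendsto (fun ε => ∫ y, (max (v ε * cstar y) (-1 + ε)) ^ 2 * η y)
        (𝓝[>] 0) (𝓝 (∫ y, cstar y ^ 2 * η y)) ∧
    Tendsto (fun ε => ∫ y, (max (v ε * cstar y) (-1 + ε)) ^ 2 * μ y)
        (𝓝[>] 0) (𝓝 (∫ y, cstar y ^ 2 * μ y)) := by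
  -- basic facts
  have hηint : Integrable η := by
    by_contra h
    rw [integral_undef h] at hη1; norm_num at hη1
  have hμint : Integrable μ := by
    by_contra h
    rw [integral_undef h] at hμ1; norm_num at hμ1
  have hsub : Integrable (fun y => μ y - η y) := hμint.sub hηint
  have hcm : Measurable cstar := by
    rw [hcs]
    exact Measurable.ite (measurableSet_eq_fun (hηm.add (hμm.div_const β))
      measurable_const) measurable_const
      ((hμm.sub hηm).div (hηm.add (hμm.div_const β)))
  have hcsb : ∀ y, |cstar y| ≤ 1 + β := fun y =>
    abs_le.2 ⟨by linarith [hclb y], by linarith [hcub y]⟩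
  set S : Set ℝ := {y | η y < μ y} with hSdef
  have hSm : MeasurableSet S := measurableSet_lt hηm hμm
  -- on S the denominator is positive and cstar is positive
  have hdenS : ∀ y ∈ S, 0 < η y + μ y / β := by
    intro y hy
    have h1 : 0 < μ y := lt_of_le_of_lt (hη0 y) hy
    have := hη0 y
    positivity
  have hcsS : ∀ y ∈ S, 0 < cstar y := by
    intro y hy
    rw [hcs]
    simp only
    rw [if_neg (ne_of_gt (hdenS y hy))]
    exact div_pos (by exact sub_pos.2 hy) (hdenS y hy)
  -- off S, cstar ≤ 0 and μ - η ≤ 0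
  have hoffS : ∀ y, y ∉ S → cstar y ≤ 0 ∧ μ y - η y ≤ 0 := by
    intro y hy
    have hle : μ y ≤ η y := not_lt.1 hy
    refine ⟨?_, by linarith⟩
    rw [hcs]; simp only
    split_ifs with h
    · exact le_refl 0
    · refine div_nonpos_iff.2 (Or.inr ⟨by linarith, ?_⟩)
      have := hη0 y; have := hμ0 y; positivity
  -- the key positive constant
  set I : ℝ := ∫ y in S, cstar y * (μ y - η y) with hIdef
  have hIeq : I = ∫ y in S,
      (if η y + μ y / β = 0 then 0 else (μ y - η y) ^ 2 / (η y + μ y / β)) := by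
    refine setIntegral_congr_fun hSm fun y hy => ?_
    have hd := hdenS y hy
    rw [hcs]
    simp only
    rw [if_neg (ne_of_gt hd), if_neg (ne_of_gt hd), div_mul_eq_mul_div, sq]
  have hI : 0 < I := by rw [hIeq]; exact hIpos
  -- integrability helper
  have hint : ∀ (g : ℝ → ℝ), Measurable g → (∃ C, ∀ y, |g y| ≤ C) →
      Integrable (fun y => g y * (μ y - η y)) := by
    intro g hg ⟨C, hC⟩
    exact hsub.bdd_mul hg.aestronglyMeasurable (Filter.Eventually.of_forall fun y => by
      simpa [Real.norm_eq_abs] using hC y)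
  have hintc : Integrable (fun y => cstar y * (μ y - η y)) :=
    hint cstar hcm ⟨1 + β, hcsb⟩
  -- the key bound on v
  have hvb : ∀ ε ∈ Ioo (0:ℝ) 1, 1 ≤ v ε ∧ v ε ≤ 1 + ε / I := by
    intro ε hε
    obtain ⟨hε0, hε1⟩ := hε
    obtain ⟨hw0, heq⟩ := hv ε ⟨hε0, hε1⟩
    set w := v ε with hwdef
    have hmm : Measurable (fun y => max (w * cstar y) (-1 + ε) - cstar y) :=
      ((measurable_const.mul hcm).max measurable_const).sub hcm
    have hmb : ∃ C, ∀ y, |max (w * cstar y) (-1 + ε) - cstar y| ≤ C := by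
      refine ⟨(w * (1 + β) + 1) + (1 + β), fun y => ?_⟩
      have h1 : |max (w * cstar y) (-1 + ε)| ≤ w * (1 + β) + 1 := by
        refine (abs_max_le_max_abs_abs).trans (max_le ?_ ?_)
        · rw [abs_mul, abs_of_pos hw0]
          nlinarith [hcsb y, abs_nonneg (cstar y)]
        · rw [abs_le]; constructor <;> nlinarith
      calc |max (w * cstar y) (-1 + ε) - cstar y|
          ≤ |max (w * cstar y) (-1 + ε)| + |cstar y| := abs_sub _ _
        _ ≤ (w * (1 + β) + 1) + (1 + β) := add_le_add h1 (hcsb y)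
    have hintd : Integrable
        (fun y => (max (w * cstar y) (-1 + ε) - cstar y) * (μ y - η y)) :=
      hint _ hmm hmb
    have hintm : Integrable (fun y => max (w * cstar y) (-1 + ε) * (μ y - η y)) :=
      hint _ ((measurable_const.mul hcm).max measurable_const)
        (by obtain ⟨C, hC⟩ := hmb; exact ⟨C + (1 + β), fun y => by
          have := hC y; have := hcsb y
          calc |max (w * cstar y) (-1 + ε)|
              = |(max (w * cstar y) (-1 + ε) - cstar y) + cstar y| := by ring_nf
            _ ≤ |max (w * cstar y) (-1 + ε) - cstar y| + |cstar y| := abs_add_le _ _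
            _ ≤ C + (1 + β) := by linarith⟩)
    have hzero : ∫ y, (max (w * cstar y) (-1 + ε) - cstar y) * (μ y - η y) = 0 := by
      have : (fun y => (max (w * cstar y) (-1 + ε) - cstar y) * (μ y - η y))
          = fun y => max (w * cstar y) (-1 + ε) * (μ y - η y)
            - cstar y * (μ y - η y) := by
        funext y; ring
      rw [this, integral_sub hintm hintc, heq, hconstr, sub_self]
    have hsplit : (∫ y in S, (max (w * cstar y) (-1 + ε) - cstar y) * (μ y - η y))
        + ∫ y in Sᶜ, (max (w * cstar y) (-1 + ε) - cstar y) * (μ y - η y) = 0 := by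
      rw [integral_add_compl hSm hintd, hzero]
    have hSpart : (∫ y in S, (max (w * cstar y) (-1 + ε) - cstar y) * (μ y - η y))
        = (w - 1) * I := by
      rw [hIdef, ← integral_const_mul]
      refine setIntegral_congr_fun hSm fun y hy => ?_
      have hc := hcsS y hy
      have hmax : max (w * cstar y) (-1 + ε) = w * cstar y :=
        max_eq_left (by nlinarith)
      rw [hmax]; ring
    constructor
    · -- 1 ≤ w
      by_contra hlt
      push_neg at hlt
      have hSc : ∫ y in Sᶜ, (max (w * cstar y) (-1 + ε) - cstar y) * (μ y - η y)
          ≤ 0 := by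
        refine setIntegral_nonpos hSm.compl fun y hy => ?_
        obtain ⟨hc0, hd0⟩ := hoffS y hy
        have h1 : cstar y ≤ w * cstar y := by nlinarith
        have h2 : cstar y ≤ max (w * cstar y) (-1 + ε) := h1.trans (le_max_left _ _)
        exact mul_nonpos_of_nonneg_of_nonpos (by linarith) hd0
      nlinarith [hsplit, hSpart]
    · -- w ≤ 1 + ε / I
      have h1w : 1 ≤ w := by
        by_contra hlt
        push_neg at hlt
        have hSc : ∫ y in Sᶜ, (max (w * cstar y) (-1 + ε) - cstar y) * (μ y - η y)
            ≤ 0 := by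
          refine setIntegral_nonpos hSm.compl fun y hy => ?_
          obtain ⟨hc0, hd0⟩ := hoffS y hy
          have h1 : cstar y ≤ w * cstar y := by nlinarith
          have h2 : cstar y ≤ max (w * cstar y) (-1 + ε) := h1.trans (le_max_left _ _)
          exact mul_nonpos_of_nonneg_of_nonpos (by linarith) hd0
        nlinarith [hsplit, hSpart]
      -- pointwise lower bound off S
      have hptw : ∀ y ∈ Sᶜ, ε * (μ y - η y)
          ≤ (max (w * cstar y) (-1 + ε) - cstar y) * (μ y - η y) := by
        intro y hy
        obtain ⟨hc0, hd0⟩ := hoffS y hy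
        have hub : max (w * cstar y) (-1 + ε) - cstar y ≤ ε := by
          have h1 : w * cstar y ≤ cstar y + ε := by nlinarith
          have h2 : -1 + ε ≤ cstar y + ε := by linarith [hclb y]
          have := max_le h1 h2
          linarith
        exact mul_le_mul_of_nonpos_right hub hd0
      have hSc : ε * ((∫ y in Sᶜ, μ y) - ∫ y in Sᶜ, η y)
          ≤ ∫ y in Sᶜ, (max (w * cstar y) (-1 + ε) - cstar y) * (μ y - η y) := by
        have := setIntegral_mono_on
          (f := fun y => ε * (μ y - η y))
          (g := fun y => (max (w * cstar y) (-1 + ε) - cstar y) * (μ y - η y))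
          ((hsub.const_mul ε).integrableOn) (hintd.integrableOn) hSm.compl hptw
        calc ε * ((∫ y in Sᶜ, μ y) - ∫ y in Sᶜ, η y)
            = ∫ y in Sᶜ, ε * (μ y - η y) := by
              rw [integral_const_mul, integral_sub hμint.integrableOn
                hηint.integrableOn]
          _ ≤ _ := this
      have hμSc : 0 ≤ ∫ y in Sᶜ, μ y := setIntegral_nonneg hSm.compl fun y _ => hμ0 y
      have hηSc : ∫ y in Sᶜ, η y ≤ 1 := by
        rw [← hη1]
        exact setIntegral_le_integral hηint (Filter.Eventually.of_forall hη0)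
      have hexp : ε * ((∫ y in Sᶜ, μ y) - (∫ y in Sᶜ, η y) + 1)
          = ε * ((∫ y in Sᶜ, μ y) - ∫ y in Sᶜ, η y) + ε := by ring
      have hnn : 0 ≤ ε * ((∫ y in Sᶜ, μ y) - (∫ y in Sᶜ, η y) + 1) :=
        mul_nonneg hε0.le (by linarith)
      have hlow : -ε ≤ ∫ y in Sᶜ,
          (max (w * cstar y) (-1 + ε) - cstar y) * (μ y - η y) := by
        linarith
      have hkey : (w - 1) * I ≤ ε := by linarith [hsplit, hSpart]
      have hfin : w - 1 ≤ ε / I := (le_div_iff₀ hI).2 hkey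
      linarith
    -- end hvb
  -- uniform pointwise bound on the squared difference
  have hCpos : 0 < (1 + β) / I + 1 := by
    have := div_pos (add_pos one_pos hβ : (0:ℝ) < 1 + β) hI; linarith
  set K : ℝ := ((1 + β) / I + 1) * (3 * (1 + β) + ((1 + β) / I + 1)) with hKdef
  have hptsq : ∀ ε ∈ Ioo (0:ℝ) 1, ∀ y,
      |(max (v ε * cstar y) (-1 + ε)) ^ 2 - cstar y ^ 2| ≤ K * ε := by
    intro ε hε y
    obtain ⟨h1w, h2w⟩ := hvb ε hε
    obtain ⟨hε0, hε1⟩ := hε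
    have hδ : |max (v ε * cstar y) (-1 + ε) - cstar y|
        ≤ ((1 + β) / I + 1) * ε := by
      have hrw : cstar y = max (cstar y) (-1) := (max_eq_left (hclb y)).symm
      calc |max (v ε * cstar y) (-1 + ε) - cstar y|
          = |max (v ε * cstar y) (-1 + ε) - max (cstar y) (-1)| := by rw [← hrw]
        _ ≤ max |v ε * cstar y - cstar y| |(-1 + ε) - (-1)| :=
            abs_max_sub_max_le_max _ _ _ _
        _ ≤ ((1 + β) / I + 1) * ε := by
            refine max_le ?_ ?_
            · have heq1 : |v ε * cstar y - cstar y| = (v ε - 1) * |cstar y| := by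
                rw [← abs_of_nonneg (sub_nonneg.2 h1w), ← abs_mul]
                ring_nf
              rw [heq1]
              have h3 := hcsb y
              have h4 : v ε - 1 ≤ ε / I := by linarith
              have h5 : (v ε - 1) * |cstar y| ≤ (ε / I) * (1 + β) :=
                mul_le_mul h4 h3 (abs_nonneg _) (by positivity)
              have h6 : ((1 + β) / I) * ε ≤ ((1 + β) / I + 1) * ε := by
                have hexp2 : ((1 + β) / I + 1) * ε = ((1 + β) / I) * ε + ε := by
                  ring
                linarith
              have h8 : (ε / I) * (1 + β) = ((1 + β) / I) * ε := by ring
              linarith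
            · have heq2 : |(-1 + ε) - (-1)| = ε := by
                rw [show (-1 + ε) - (-1) = ε by ring, abs_of_pos hε0]
              rw [heq2]
              have h9 : 1 * ε ≤ ((1 + β) / I + 1) * ε :=
                mul_le_mul_of_nonneg_right
                  (by linarith [div_nonneg (by linarith : (0:ℝ) ≤ 1 + β) hI.le])
                  hε0.le
              linarith
    have habs2 : |max (v ε * cstar y) (-1 + ε) + cstar y|
        ≤ 3 * (1 + β) + ((1 + β) / I + 1) := by
      have h1 : |max (v ε * cstar y) (-1 + ε)|
          ≤ |cstar y| + ((1 + β) / I + 1) * ε := by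
        calc |max (v ε * cstar y) (-1 + ε)|
            = |(max (v ε * cstar y) (-1 + ε) - cstar y) + cstar y| := by ring_nf
          _ ≤ |max (v ε * cstar y) (-1 + ε) - cstar y| + |cstar y| := abs_add_le _ _
          _ ≤ |cstar y| + ((1 + β) / I + 1) * ε := by linarith
      have h2 := hcsb y
      have h7 : ((1 + β) / I + 1) * ε ≤ ((1 + β) / I + 1) * 1 :=
        mul_le_mul_of_nonneg_left hε1.le hCpos.le
      calc |max (v ε * cstar y) (-1 + ε) + cstar y|
          ≤ |max (v ε * cstar y) (-1 + ε)| + |cstar y| := abs_add_le _ _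
        _ ≤ 3 * (1 + β) + ((1 + β) / I + 1) := by linarith
    calc |(max (v ε * cstar y) (-1 + ε)) ^ 2 - cstar y ^ 2|
        = |max (v ε * cstar y) (-1 + ε) - cstar y|
          * |max (v ε * cstar y) (-1 + ε) + cstar y| := by
          rw [← abs_mul]; ring_nf
      _ ≤ (((1 + β) / I + 1) * ε) * (3 * (1 + β) + ((1 + β) / I + 1)) :=
          mul_le_mul hδ habs2 (abs_nonneg _) (mul_nonneg hCpos.le hε0.le)
      _ = K * ε := by rw [hKdef]; ring
  -- conclusion: a general lemma for any nonnegative integrable density ρ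
  have main : ∀ ρ : ℝ → ℝ, Measurable ρ → (∀ y, 0 ≤ ρ y) → Integrable ρ →
      (∫ y, ρ y) = 1 →
      Tendsto (fun ε => ∫ y, (max (v ε * cstar y) (-1 + ε)) ^ 2 * ρ y)
        (𝓝[>] 0) (𝓝 (∫ y, cstar y ^ 2 * ρ y)) := by
    intro ρ hρm hρ0 hρint hρ1
    have hintcs : Integrable (fun y => cstar y ^ 2 * ρ y) :=
      hρint.bdd_mul (hcm.pow_const 2).aestronglyMeasurable
        (Filter.Eventually.of_forall fun y => by
          rw [Real.norm_eq_abs, abs_pow]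
          exact pow_le_pow_left₀ (abs_nonneg _) (hcsb y) 2)
    have hbound : ∀ ε ∈ Ioo (0:ℝ) 1,
        |(∫ y, (max (v ε * cstar y) (-1 + ε)) ^ 2 * ρ y)
          - ∫ y, cstar y ^ 2 * ρ y| ≤ K * ε := by
      intro ε hε
      obtain ⟨hε0, hε1⟩ := hε
      have hintme : Integrable (fun y => (max (v ε * cstar y) (-1 + ε)) ^ 2 * ρ y) := by
        refine hρint.bdd_mul (c := K * ε + (1 + β) ^ 2)
          (((measurable_const.mul hcm).max measurable_const).pow_const
            2).aestronglyMeasurable ?_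
        obtain ⟨h1w, h2w⟩ := hvb ε ⟨hε0, hε1⟩
        refine Filter.Eventually.of_forall fun y => ?_
        have h1 := hptsq ε ⟨hε0, hε1⟩ y
        have h2 : |cstar y ^ 2| ≤ (1 + β) ^ 2 := by
          rw [abs_pow]
          exact pow_le_pow_left₀ (abs_nonneg _) (hcsb y) 2
        rw [Real.norm_eq_abs]
        calc |(max (v ε * cstar y) (-1 + ε)) ^ 2|
            = |((max (v ε * cstar y) (-1 + ε)) ^ 2 - cstar y ^ 2) + cstar y ^ 2| := by
              ring_nf
          _ ≤ |(max (v ε * cstar y) (-1 + ε)) ^ 2 - cstar y ^ 2| + |cstar y ^ 2| :=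
              abs_add_le _ _
          _ ≤ K * ε + (1 + β) ^ 2 := add_le_add h1 h2
      rw [← integral_sub hintme hintcs]
      have h3 : ∀ y, |(max (v ε * cstar y) (-1 + ε)) ^ 2 * ρ y
          - cstar y ^ 2 * ρ y| ≤ (K * ε) * ρ y := by
        intro y
        have : (max (v ε * cstar y) (-1 + ε)) ^ 2 * ρ y - cstar y ^ 2 * ρ y
            = ((max (v ε * cstar y) (-1 + ε)) ^ 2 - cstar y ^ 2) * ρ y := by ring
        rw [this, abs_mul, abs_of_nonneg (hρ0 y)]
        exact mul_le_mul_of_nonneg_right (hptsq ε ⟨hε0, hε1⟩ y) (hρ0 y)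
      calc |∫ y, ((max (v ε * cstar y) (-1 + ε)) ^ 2 * ρ y - cstar y ^ 2 * ρ y)|
          ≤ ∫ y, |(max (v ε * cstar y) (-1 + ε)) ^ 2 * ρ y - cstar y ^ 2 * ρ y| := by
            simpa [Real.norm_eq_abs] using
              norm_integral_le_integral_norm
                (fun y => (max (v ε * cstar y) (-1 + ε)) ^ 2 * ρ y
                  - cstar y ^ 2 * ρ y)
        _ ≤ ∫ y, (K * ε) * ρ y := by
            refine integral_mono ?_ (hρint.const_mul _) h3
            exact (hintme.sub hintcs).abs
        _ = K * ε := by rw [integral_const_mul, hρ1, mul_one]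
    have hev : ∀ᶠ ε in 𝓝[>] (0:ℝ),
        ‖(∫ y, (max (v ε * cstar y) (-1 + ε)) ^ 2 * ρ y)
          - ∫ y, cstar y ^ 2 * ρ y‖ ≤ K * ε := by
      filter_upwards [Ioo_mem_nhdsGT_of_mem
        (by constructor <;> norm_num : (0:ℝ) ∈ Ico (0:ℝ) 1)] with ε hε
      simpa [Real.norm_eq_abs] using hbound ε hε
    have hK0 : Tendsto (fun ε : ℝ => K * ε) (𝓝[>] 0) (𝓝 0) := by
      have : Tendsto (fun ε : ℝ => K * ε) (𝓝 0) (𝓝 (K * 0)) :=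
        (continuous_const.mul continuous_id).tendsto 0
      rw [mul_zero] at this
      exact this.mono_left nhdsWithin_le_nhds
    have hsq := squeeze_zero_norm' hev hK0
    have := hsq.add (tendsto_const_nhds
      (x := ∫ y, cstar y ^ 2 * ρ y) (f := 𝓝[>] (0:ℝ)))
    simpa using this
  exact ⟨main η hηm hη0 hηint hη1, main μ hμm hμ0 hμint hμ1⟩
end
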